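/- arXiv:1202.1001 — 10 statements merged into one kernel-verified Lean document; each statement's English description precedes it below -/
import Mathlib

section
/- Let u : ℝ → ℝ be twice continuously differentiable with u''(y) = y·u(y) for all y ≥ 0, u(y) > 0 for all y ≥ 0, and u(y) → 0 as y → ∞. Then for every μ ≥ 0 and every x ≥ 0 one has μ·u(μ² + x) + u'(μ² + x) < 0; consequently the function x ↦ e^{μx}·u(μ² + x) is strictly decreasing on [0, ∞). -/
open Real Filter Set

/-- If `u` is a twice continuously differentiable, positive solution of the
Airy equation `u'' = y·u` on `[0,∞)` tending to `0` at infinity, then for every `μ ≥ 0`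
and `x ≥ 0` we have `μ·u(μ²+x) + u'(μ²+x) < 0`; consequently
`x ↦ exp(μx)·u(μ²+x)` is strictly decreasing on `[0,∞)`. -/
theorem airy_decreasing_solution (u : ℝ → ℝ) (hu : ContDiff ℝ 2 u)
    (hode : ∀ y ≥ (0:ℝ), deriv (deriv u) y = y * u y)
    (hpos : ∀ y ≥ (0:ℝ), 0 < u y)
    (hlim : Tendsto u atTop (nhds 0))
    (μ : ℝ) (hμ : 0 ≤ μ) :
    (∀ x ≥ (0:ℝ), μ * u (μ ^ 2 + x) + deriv u (μ ^ 2 + x) < 0) ∧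
    StrictAntiOn (fun x => Real.exp (μ * x) * u (μ ^ 2 + x)) (Set.Ici 0) := by
  set v := deriv u with hv
  have hud : Differentiable ℝ u := hu.differentiable (by norm_num)
  have hv1 : ContDiff ℝ 1 v := by
    have h2 : ContDiff ℝ ((1:ℕ) + 1) u := by exact_mod_cast hu
    exact (contDiff_succ_iff_deriv.mp h2).2.2
  have hvd : Differentiable ℝ v := hv1.differentiable (by norm_num)
  have hvc : Continuous v := hvd.continuous
  have huc : Continuous u := hud.continuous
  -- Lemma A : v < 0 on [0,∞)
  have hvneg : ∀ y ≥ (0:ℝ), v y < 0 := by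
    intro y₀ hy₀
    by_contra h
    push_neg at h
    have hmono : MonotoneOn v (Ici y₀) := by
      apply monotoneOn_of_deriv_nonneg (convex_Ici y₀) hvc.continuousOn
        (hvd.differentiableOn)
      intro y hy
      rw [interior_Ici] at hy
      have hy' : (0:ℝ) ≤ y := le_trans hy₀ (le_of_lt hy)
      rw [hode y hy']
      exact mul_nonneg hy' (hpos y hy').le
    have humono : MonotoneOn u (Ici y₀) := by
      apply monotoneOn_of_deriv_nonneg (convex_Ici y₀) huc.continuousOn
        (hud.differentiableOn)
      intro y hy
      rw [interior_Ici] at hy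
      exact le_trans h (hmono self_mem_Ici (mem_Ici.mpr (le_of_lt hy)) (le_of_lt hy))
    have hev : ∀ᶠ y in atTop, u y < u y₀ := hlim.eventually_lt_const (hpos y₀ hy₀)
    obtain ⟨y, hy1, hy2⟩ := (hev.and (eventually_ge_atTop y₀)).exists
    exact absurd (humono self_mem_Ici hy2 hy2) (not_le.mpr hy1)
  -- u is antitone on [0,∞)
  have huanti : AntitoneOn u (Ici 0) := by
    apply antitoneOn_of_deriv_nonpos (convex_Ici 0) huc.continuousOn hud.differentiableOn
    intro y hy
    rw [interior_Ici] at hy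
    exact (hvneg y hy.le).le
  -- w = v² - y u²
  set w : ℝ → ℝ := fun y => v y ^ 2 - y * u y ^ 2 with hwdef
  have hwd : ∀ y ≥ (0:ℝ), HasDerivAt w (-(u y ^ 2)) y := by
    intro y hy
    have h1 : HasDerivAt (fun t => v t ^ 2) (2 * v y ^ 1 * (y * u y)) y := by
      have := ((hvd y).hasDerivAt).fun_pow 2
      have hdv : deriv v y = y * u y := hode y hy
      simpa [hdv] using this
    have h2 : HasDerivAt (fun t => t * u t ^ 2) (1 * u y ^ 2 + y * (2 * u y ^ 1 * v y)) y :=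
      (hasDerivAt_id y).fun_mul (((hud y).hasDerivAt).fun_pow 2)
    have h3 := h1.fun_sub h2
    refine h3.congr_deriv ?_
    ring
  have hwanti : StrictAntiOn w (Ici 0) := by
    refine strictAntiOn_of_deriv_neg (convex_Ici 0) ?_ ?_
    · exact (((hvc.pow 2).sub (continuous_id.mul (huc.pow 2))).continuousOn)
    intro y hy
    rw [interior_Ici] at hy
    rw [(hwd y hy.le).deriv]
    exact neg_neg_of_pos (pow_pos (hpos y hy.le) 2)
  -- Lemma B : w > 0 on [0,∞)
  have hwpos : ∀ y ≥ (0:ℝ), 0 < w y := by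
    intro y₁ hy₁
    by_contra h
    push_neg at h
    set y₂ := y₁ + 1 with hy₂def
    have hy₂0 : (0:ℝ) < y₂ := by linarith
    have hw2 : w y₂ < 0 :=
      lt_of_lt_of_le (hwanti (mem_Ici.mpr hy₁) (mem_Ici.mpr (by linarith)) (lt_add_one y₁)) h
    set c := -w y₂ with hcdef
    have hcpos : 0 < c := neg_pos.mpr hw2
    have hu2pos : 0 < u y₂ := hpos y₂ hy₂0.le
    set d := c / u y₂ with hddef
    have hdpos : 0 < d := div_pos hcpos hu2pos
    have hkey : ∀ y ≥ y₂, d ≤ y * u y := by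
      intro y hy
      have hy0 : 0 < y := lt_of_lt_of_le hy₂0 hy
      have hwle : w y ≤ w y₂ := by
        rcases eq_or_lt_of_le hy with h' | h'
        · rw [← h']
        · exact (hwanti (mem_Ici.mpr hy₂0.le) (mem_Ici.mpr hy0.le) h').le
      have h1 : c ≤ y * u y ^ 2 := by
        have : v y ^ 2 - y * u y ^ 2 ≤ -c := by
          rw [hcdef, neg_neg]; exact hwle
        nlinarith [sq_nonneg (v y)]
      have h2 : u y ≤ u y₂ := huanti (mem_Ici.mpr hy₂0.le) (mem_Ici.mpr hy0.le) hy
      have hupos : 0 < u y := hpos y hy0.le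
      rw [hddef, div_le_iff₀ hu2pos]
      nlinarith [mul_le_mul_of_nonneg_left h2 (mul_nonneg hy0.le hupos.le)]
    have hg : MonotoneOn (fun y => v y - d * y) (Ici y₂) := by
      refine monotoneOn_of_deriv_nonneg (convex_Ici y₂) ?_ ?_ ?_
      · exact ((hvc.sub (continuous_const.mul continuous_id)).continuousOn)
      · exact ((hvd.sub ((differentiable_id.const_mul d))).differentiableOn)
      intro y hy
      rw [interior_Ici] at hy
      have hDA : HasDerivAt (fun y => v y - d * y) (y * u y - d) y := by
        have := ((hvd y).hasDerivAt).fun_sub ((hasDerivAt_id y).const_mul d)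
        have hdv : deriv v y = y * u y := hode y (le_trans hy₂0.le (le_of_lt hy))
        simpa [hdv] using this
      rw [hDA.deriv]
      linarith [hkey y (le_of_lt hy)]
    set Y := y₂ + (1 + |v y₂|) / d with hYdef
    have hY : y₂ ≤ Y := le_add_of_nonneg_right (by positivity)
    have hle := hg self_mem_Ici (mem_Ici.mpr hY) hY
    simp only at hle
    have hdY : d * (Y - y₂) = 1 + |v y₂| := by
      rw [hYdef]
      field_simp
      ring
    have hvY : 0 < v Y := by
      nlinarith [neg_abs_le (v y₂)]
    exact absurd hvY (not_lt.mpr (hvneg Y (by linarith)).le)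
  -- main inequality
  have hmain : ∀ x ≥ (0:ℝ), μ * u (μ ^ 2 + x) + v (μ ^ 2 + x) < 0 := by
    intro x hx
    set y := μ ^ 2 + x with hydef
    have hy0 : (0:ℝ) ≤ y := by positivity
    have h1 : 0 < v y ^ 2 - y * u y ^ 2 := hwpos y hy0
    have hupos : 0 < u y := hpos y hy0
    have h2 : μ ^ 2 * u y ^ 2 < v y ^ 2 := by nlinarith [sq_nonneg (u y), sq_nonneg μ]
    have hvy : v y < 0 := hvneg y hy0
    nlinarith [mul_nonneg hμ hupos.le]
  refine ⟨hmain, ?_⟩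
  have hf : ∀ x : ℝ, HasDerivAt (fun x => Real.exp (μ * x) * u (μ ^ 2 + x))
      (Real.exp (μ * x) * (μ * u (μ ^ 2 + x) + v (μ ^ 2 + x))) x := by
    intro x
    have h1 : HasDerivAt (fun x : ℝ => Real.exp (μ * x)) (μ * Real.exp (μ * x)) x := by
      simpa [mul_comm, Function.comp_def] using (Real.hasDerivAt_exp (μ * x)).comp x ((hasDerivAt_id x).const_mul μ)
    have h2 : HasDerivAt (fun x : ℝ => u (μ ^ 2 + x)) (v (μ ^ 2 + x)) x := by
      simpa [Function.comp_def] using ((hud (μ ^ 2 + x)).hasDerivAt).comp x ((hasDerivAt_id x).const_add (μ ^ 2))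
    have h3 := h1.fun_mul h2
    refine h3.congr_deriv ?_
    ring
  refine strictAntiOn_of_deriv_neg (convex_Ici 0) ?_ ?_
  · exact (((Real.continuous_exp.comp (continuous_const.mul continuous_id)).mul
      (huc.comp (continuous_const.add continuous_id))).continuousOn)
  intro x hx
  rw [interior_Ici] at hx
  rw [(hf x).deriv]
  exact mul_neg_of_pos_of_neg (Real.exp_pos _) (hmain x hx.le)
end

section
/- Let u : ℝ → ℝ be twice continuously differentiable with u''(y) = y·u(y) for all y ≥ 0, u(y) > 0 for all y ≥ 0, and u(y) → 0 as y → ∞, and let v : ℝ → ℝ be twice continuously differentiable with v''(y) = y·v(y), v(y) > 0 and v'(y) > 0 for all y ≥ 0. Fix μ ≥ 0 and set C := −(μ·v(μ²) + v'(μ²)) / (μ·u(μ²) + u'(μ²)) (the denominator is nonzero since μ·u(μ²)+u'(μ²) < 0) and ψ(x) := e^{μx}·( C·u(μ² + x) + v(μ² + x) ) for x ≥ 0. Then ψ'(0) = 0 and ψ'(x) > 0 for all x > 0. -/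
open Real Filter Set

/-- From `ContDiff ℝ 2`, the derivative is differentiable. -/
lemma airyAux_deriv_diff {u : ℝ → ℝ} (hu : ContDiff ℝ 2 u) :
    Differentiable ℝ (deriv u) := by
  have h : ContDiff ℝ ((1 : WithTop ℕ∞) + 1) u := by
    convert hu using 2
    norm_num
  exact ((contDiff_succ_iff_deriv.mp h).2.2).differentiable one_ne_zero

/-- A positive solution tending to zero with `u'' = y u` on `[0,∞)` has nonpositive
derivative on `[0,∞)`. -/
lemma airyAux_deriv_nonpos {u : ℝ → ℝ}
    (hu1 : Differentiable ℝ u) (hu2 : Differentiable ℝ (deriv u))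
    (hu_ode : ∀ y ≥ (0:ℝ), deriv (deriv u) y = y * u y)
    (hu_pos : ∀ y ≥ (0:ℝ), 0 < u y)
    (hu_lim : Tendsto u atTop (nhds 0))
    {Y : ℝ} (hY : 0 ≤ Y) : deriv u Y ≤ 0 := by
  by_contra h
  push_neg at h
  set c := deriv u Y with hc
  have hmono : MonotoneOn (deriv u) (Ici Y) := by
    apply monotoneOn_of_deriv_nonneg (convex_Ici Y) hu2.continuous.continuousOn
      hu2.differentiableOn
    intro x hx
    rw [interior_Ici] at hx
    have hx0 : (0:ℝ) ≤ x := le_trans hY (le_of_lt hx)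
    rw [hu_ode x hx0]
    exact mul_nonneg hx0 (hu_pos x hx0).le
  have hd : ∀ x : ℝ, HasDerivAt (fun y => u y - c * y) (deriv u x - c * 1) x :=
    fun x => (hu1 x).hasDerivAt.sub ((hasDerivAt_id x).const_mul c)
  have hd_diff : Differentiable ℝ (fun y => u y - c * y) := fun x => (hd x).differentiableAt
  have ht : MonotoneOn (fun y => u y - c * y) (Ici Y) := by
    apply monotoneOn_of_deriv_nonneg (convex_Ici Y) hd_diff.continuous.continuousOn
      hd_diff.differentiableOn
    intro x hx
    rw [interior_Ici] at hx
    rw [(hd x).deriv]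
    have := hmono self_mem_Ici (le_of_lt hx : Y ≤ x) (le_of_lt hx)
    linarith
  obtain ⟨N, hN⟩ := eventually_atTop.mp (hu_lim.eventually_lt_const (hu_pos Y hY))
  set z := max N (Y + 1) with hz
  have hz1 : Y + 1 ≤ z := le_max_right _ _
  have hzY : Y ≤ z := by linarith
  have hmt := ht self_mem_Ici (show z ∈ Ici Y from hzY) hzY
  simp only at hmt
  have hNz := hN z (le_max_left _ _)
  nlinarith [mul_nonneg h.le (sub_nonneg.mpr hzY)]

/-- Key inequality: `μ u(μ²) + u'(μ²) < 0`. -/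
lemma airyAux_key {u : ℝ → ℝ} (hu : ContDiff ℝ 2 u)
    (hu_ode : ∀ y ≥ (0:ℝ), deriv (deriv u) y = y * u y)
    (hu_pos : ∀ y ≥ (0:ℝ), 0 < u y)
    (hu_lim : Tendsto u atTop (nhds 0))
    {μ : ℝ} (hμ : 0 ≤ μ) : μ * u (μ ^ 2) + deriv u (μ ^ 2) < 0 := by
  have hu1 : Differentiable ℝ u := hu.differentiable (by norm_num)
  have hu2 : Differentiable ℝ (deriv u) := airyAux_deriv_diff hu
  set a := μ ^ 2 with ha_def
  have ha : (0:ℝ) ≤ a := sq_nonneg μ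
  by_contra hD
  push_neg at hD
  set p : ℝ → ℝ := fun y => deriv u y + μ * u y with hp_def
  have hpHas : ∀ y : ℝ, HasDerivAt p (deriv (deriv u) y + μ * deriv u y) y :=
    fun y => ((hu2 y).hasDerivAt).add (((hu1 y).hasDerivAt).const_mul μ)
  have hE : ∀ y : ℝ, HasDerivAt (fun y => Real.exp (-(μ * y))) (Real.exp (-(μ * y)) * -μ) y := by
    intro y
    have h1 : HasDerivAt (fun y : ℝ => -(μ * y)) (-μ) y := by
      simpa using ((hasDerivAt_id y).const_mul (-μ))
    exact h1.exp
  set r : ℝ → ℝ := fun y => Real.exp (-(μ * y)) * p y with hr_def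
  have hrHas : ∀ y : ℝ, HasDerivAt r
      (Real.exp (-(μ * y)) * -μ * p y +
        Real.exp (-(μ * y)) * (deriv (deriv u) y + μ * deriv u y)) y :=
    fun y => (hE y).mul (hpHas y)
  have hr_diff : Differentiable ℝ r := fun y => (hrHas y).differentiableAt
  have hr_deriv : ∀ y ≥ (0:ℝ), deriv r y = Real.exp (-(μ * y)) * ((y - a) * u y) := by
    intro y hy
    rw [(hrHas y).deriv, hu_ode y hy]
    simp only [hp_def, ha_def]
    ring
  have hr_mono : MonotoneOn r (Ici a) := by
    apply monotoneOn_of_deriv_nonneg (convex_Ici a) hr_diff.continuous.continuousOn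
      hr_diff.differentiableOn
    intro x hx
    rw [interior_Ici] at hx
    have hx0 : (0:ℝ) ≤ x := le_trans ha hx.le
    rw [hr_deriv x hx0]
    have h1 := hu_pos x hx0
    have h2 : (0:ℝ) ≤ (x - a) * u x := mul_nonneg (by linarith [(mem_Ioi.mp hx).le]) h1.le
    positivity
  have hra : 0 ≤ r a := by
    have hpa : p a = deriv u a + μ * u a := rfl
    show (0:ℝ) ≤ Real.exp (-(μ * a)) * p a
    exact mul_nonneg (Real.exp_pos _).le (by rw [hpa]; linarith)
  have hp_nonneg : ∀ y ≥ a, 0 ≤ p y := by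
    intro y hy
    have hr_y : 0 ≤ r y := le_trans hra (hr_mono self_mem_Ici hy hy)
    have he := Real.exp_pos (-(μ * y))
    have : r y = Real.exp (-(μ * y)) * p y := rfl
    nlinarith
  set q : ℝ → ℝ := fun y => Real.exp (μ * y) * u y with hq_def
  have hqHas : ∀ y : ℝ, HasDerivAt q
      (Real.exp (μ * y) * μ * u y + Real.exp (μ * y) * deriv u y) y := by
    intro y
    have h1 : HasDerivAt (fun y : ℝ => μ * y) μ y := by
      simpa using (hasDerivAt_id y).const_mul μ
    exact (h1.exp).mul (hu1 y).hasDerivAt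
  have hq_diff : Differentiable ℝ q := fun y => (hqHas y).differentiableAt
  have hq_mono : MonotoneOn q (Ici a) := by
    apply monotoneOn_of_deriv_nonneg (convex_Ici a) hq_diff.continuous.continuousOn
      hq_diff.differentiableOn
    intro x hx
    rw [interior_Ici] at hx
    rw [(hqHas x).deriv]
    have hp := hp_nonneg x hx.le
    have hp' : p x = deriv u x + μ * u x := rfl
    rw [hp'] at hp
    have he := Real.exp_pos (μ * x)
    nlinarith
  set c : ℝ := Real.exp (μ * a) * u a with hc_def
  have hc_pos : 0 < c := mul_pos (Real.exp_pos _) (hu_pos a ha)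
  have hu_lb : ∀ y ≥ a, c * Real.exp (-(μ * y)) ≤ u y := by
    intro y hy
    have hmq := hq_mono self_mem_Ici hy hy
    have hmq' : c ≤ Real.exp (μ * y) * u y := hmq
    have he : Real.exp (μ * y) * Real.exp (-(μ * y)) = 1 := by
      rw [← Real.exp_add]; simp
    have hepos := Real.exp_pos (-(μ * y))
    calc c * Real.exp (-(μ * y)) ≤ (Real.exp (μ * y) * u y) * Real.exp (-(μ * y)) :=
          mul_le_mul_of_nonneg_right hmq' hepos.le
      _ = u y * (Real.exp (μ * y) * Real.exp (-(μ * y))) := by ring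
      _ = u y := by rw [he, mul_one]
  set E3 : ℝ := Real.exp (-(μ * (a + 2))) with hE3_def
  have hE3_pos : 0 < E3 := Real.exp_pos _
  set ε : ℝ := c * E3 * E3 with hε_def
  have hε_pos : 0 < ε := by positivity
  have hdr_lb : ∀ y ∈ Icc (a+1) (a+2), ε ≤ deriv r y := by
    intro y hy
    obtain ⟨hy1, hy2⟩ := hy
    have hy0 : (0:ℝ) ≤ y := by linarith
    rw [hr_deriv y hy0]
    have hub : c * Real.exp (-(μ * y)) ≤ u y := hu_lb y (by linarith)
    have h1 : (1:ℝ) ≤ y - a := by linarith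
    have he2 : E3 ≤ Real.exp (-(μ * y)) := by
      rw [hE3_def]
      apply Real.exp_le_exp.mpr
      nlinarith
    have hupos := hu_pos y hy0
    have hepos := Real.exp_pos (-(μ * y))
    have step1 : c * Real.exp (-(μ * y)) * 1 ≤ u y * (y - a) :=
      mul_le_mul hub h1 zero_le_one hupos.le
    nlinarith [mul_le_mul_of_nonneg_left step1 hepos.le,
      mul_le_mul he2 he2 hE3_pos.le hepos.le, mul_le_mul_of_nonneg_left
        (mul_le_mul he2 he2 hE3_pos.le hepos.le) hc_pos.le]
  -- r (a+2) ≥ ε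
  have hsd : ∀ x : ℝ, HasDerivAt (fun y => r y - ε * y) (deriv r x - ε * 1) x :=
    fun x => (hr_diff x).hasDerivAt.sub ((hasDerivAt_id x).const_mul ε)
  have hsd_diff : Differentiable ℝ (fun y => r y - ε * y) := fun x => (hsd x).differentiableAt
  have hs_mono : MonotoneOn (fun y => r y - ε * y) (Icc (a+1) (a+2)) := by
    apply monotoneOn_of_deriv_nonneg (convex_Icc _ _) hsd_diff.continuous.continuousOn
      hsd_diff.differentiableOn
    intro x hx
    rw [interior_Icc] at hx
    rw [(hsd x).deriv]
    have := hdr_lb x ⟨hx.1.le, hx.2.le⟩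
    linarith
  have hr2 : ε ≤ r (a + 2) := by
    have hmem1 : a + 1 ∈ Icc (a+1) (a+2) := ⟨le_refl _, by linarith⟩
    have hmem2 : a + 2 ∈ Icc (a+1) (a+2) := ⟨by linarith, le_refl _⟩
    have h12 := hs_mono hmem1 hmem2 (by linarith)
    simp only at h12
    have hr01 : r a ≤ r (a+1) := hr_mono self_mem_Ici (mem_Ici.mpr (by linarith)) (by linarith)
    linarith
  have hp_lb : ∀ y ≥ a + 2, ε * Real.exp (μ * y) ≤ p y := by
    intro y hy
    have hry : ε ≤ r y :=
      le_trans hr2 (hr_mono (mem_Ici.mpr (by linarith)) (mem_Ici.mpr (by linarith)) hy)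
    have hry' : ε ≤ Real.exp (-(μ * y)) * p y := hry
    have he : Real.exp (μ * y) * Real.exp (-(μ * y)) = 1 := by
      rw [← Real.exp_add]; simp
    have hepos := Real.exp_pos (μ * y)
    calc ε * Real.exp (μ * y) ≤ (Real.exp (-(μ * y)) * p y) * Real.exp (μ * y) :=
          mul_le_mul_of_nonneg_right hry' hepos.le
      _ = p y * (Real.exp (μ * y) * Real.exp (-(μ * y))) := by ring
      _ = p y := by rw [he, mul_one]
  obtain ⟨N, hN⟩ := eventually_atTop.mp (hu_lim.eventually_lt_const one_pos)
  set Y := max N (max (a + 2) (1/ε + 1)) with hY_def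
  have hY2 : a + 2 ≤ Y := le_trans (le_max_left _ _) (le_max_right _ _)
  have hYN : N ≤ Y := le_max_left _ _
  have hYε : 1/ε + 1 ≤ Y := le_trans (le_max_right _ _) (le_max_right _ _)
  have hY0 : (0:ℝ) ≤ Y := by linarith
  have hpY := hp_lb Y hY2
  have huY : u Y < 1 := hN Y hYN
  have hexp : 1 + μ * Y ≤ Real.exp (μ * Y) := by
    have := Real.add_one_le_exp (μ * Y)
    linarith
  have hgoal : μ * u Y < ε * Real.exp (μ * Y) := by
    rcases eq_or_lt_of_le hμ with h0 | h0
    · rw [← h0]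
      simp only [zero_mul]
      positivity
    · have huYpos := hu_pos Y hY0
      have hstep : μ * u Y < μ := by nlinarith
      have hY1ε : 1/ε ≤ Y - 1 := by linarith
      have hεY : 1 ≤ ε * (Y - 1) := by
        rw [div_le_iff₀ hε_pos] at hY1ε
        linarith [hY1ε]
      have h2 : μ < ε * (1 + μ * Y) := by nlinarith
      nlinarith [mul_le_mul_of_nonneg_left hexp hε_pos.le]
  have hduY : 0 < deriv u Y := by
    have hpyy : p Y = deriv u Y + μ * u Y := rfl
    rw [hpyy] at hpY
    linarith
  exact absurd hduY (not_lt.mpr (airyAux_deriv_nonpos hu1 hu2 hu_ode hu_pos hu_lim hY0))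

/-- Let `u` be a positive, decaying solution of the Airy equation `u'' = y·u`
on `[0,∞)` and `v` a positive solution with positive derivative on `[0,∞)`. For `μ ≥ 0`,
with `C := −(μ·v(μ²)+v'(μ²))/(μ·u(μ²)+u'(μ²))` and
`ψ(x) := exp(μx)·(C·u(μ²+x) + v(μ²+x))`, we have `ψ'(0) = 0` and `ψ'(x) > 0` for `x > 0`. -/
theorem airy_increasing_solution (u v : ℝ → ℝ)
    (hu : ContDiff ℝ 2 u) (hv : ContDiff ℝ 2 v)
    (hu_ode : ∀ y ≥ (0:ℝ), deriv (deriv u) y = y * u y)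
    (hu_pos : ∀ y ≥ (0:ℝ), 0 < u y)
    (hu_lim : Tendsto u atTop (nhds 0))
    (hv_ode : ∀ y ≥ (0:ℝ), deriv (deriv v) y = y * v y)
    (hv_pos : ∀ y ≥ (0:ℝ), 0 < v y)
    (hv'_pos : ∀ y ≥ (0:ℝ), 0 < deriv v y)
    (μ : ℝ) (hμ : 0 ≤ μ)
    (C : ℝ)
    (hC : C = -(μ * v (μ ^ 2) + deriv v (μ ^ 2)) / (μ * u (μ ^ 2) + deriv u (μ ^ 2)))
    (ψ : ℝ → ℝ)
    (hψ : ∀ x, ψ x = Real.exp (μ * x) * (C * u (μ ^ 2 + x) + v (μ ^ 2 + x))) :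
    deriv ψ 0 = 0 ∧ ∀ x > (0:ℝ), 0 < deriv ψ x := by
  have hu1 : Differentiable ℝ u := hu.differentiable (by norm_num)
  have hv1 : Differentiable ℝ v := hv.differentiable (by norm_num)
  have hu2 : Differentiable ℝ (deriv u) := airyAux_deriv_diff hu
  have hv2 : Differentiable ℝ (deriv v) := airyAux_deriv_diff hv
  have hD : μ * u (μ ^ 2) + deriv u (μ ^ 2) < 0 := airyAux_key hu hu_ode hu_pos hu_lim hμ
  set a := μ ^ 2 with ha_def
  have ha : (0:ℝ) ≤ a := sq_nonneg μ
  have hDa : μ * u a + deriv u a ≠ 0 := ne_of_lt hD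
  have hNv_pos : 0 < μ * v a + deriv v a :=
    add_pos_of_nonneg_of_pos (mul_nonneg hμ (hv_pos a ha).le) (hv'_pos a ha)
  have hC_pos : 0 < C := by
    rw [hC]
    rw [div_pos_iff]
    right
    constructor <;> linarith
  set G : ℝ → ℝ := fun y => C * u y + v y with hG_def
  have hG_pos : ∀ y ≥ (0:ℝ), 0 < G y := fun y hy =>
    add_pos (mul_pos hC_pos (hu_pos y hy)) (hv_pos y hy)
  have hGHas : ∀ y : ℝ, HasDerivAt G (C * deriv u y + deriv v y) y :=
    fun y => ((hu1 y).hasDerivAt.const_mul C).add (hv1 y).hasDerivAt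
  have hG1 : Differentiable ℝ G := fun y => (hGHas y).differentiableAt
  have hG'v : ∀ y, deriv G y = C * deriv u y + deriv v y := fun y => (hGHas y).deriv
  have hGd : ∀ y : ℝ, HasDerivAt G (deriv G y) y := fun y => (hG1 y).hasDerivAt
  have hG'Has : ∀ y : ℝ, HasDerivAt (deriv G)
      (C * deriv (deriv u) y + deriv (deriv v) y) y := by
    intro y
    have heq : deriv G = fun y => C * deriv u y + deriv v y := funext hG'v
    rw [heq]
    exact ((hu2 y).hasDerivAt.const_mul C).add (hv2 y).hasDerivAt
  set h : ℝ → ℝ := fun y => μ * G y + deriv G y with hh_def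
  have hhHas : ∀ y : ℝ, HasDerivAt h
      (μ * deriv G y + (C * deriv (deriv u) y + deriv (deriv v) y)) y :=
    fun y => ((hGd y).const_mul μ).add (hG'Has y)
  have hh_diff : Differentiable ℝ h := fun y => (hhHas y).differentiableAt
  have hha : h a = 0 := by
    show μ * G a + deriv G a = 0
    rw [hG'v a]
    show μ * (C * u a + v a) + (C * deriv u a + deriv v a) = 0
    rw [hC]
    field_simp
    ring
  have hE : ∀ y : ℝ, HasDerivAt (fun y => Real.exp (-(μ * y))) (Real.exp (-(μ * y)) * -μ) y := by
    intro y
    have h1 : HasDerivAt (fun y : ℝ => -(μ * y)) (-μ) y := by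
      simpa using ((hasDerivAt_id y).const_mul (-μ))
    exact h1.exp
  set H : ℝ → ℝ := fun y => Real.exp (-(μ * y)) * h y with hH_def
  have hHHas : ∀ y : ℝ, HasDerivAt H
      (Real.exp (-(μ * y)) * -μ * h y +
        Real.exp (-(μ * y)) * (μ * deriv G y + (C * deriv (deriv u) y + deriv (deriv v) y))) y :=
    fun y => (hE y).mul (hhHas y)
  have hH_diff : Differentiable ℝ H := fun y => (hHHas y).differentiableAt
  have hH_deriv : ∀ y ≥ (0:ℝ), deriv H y = Real.exp (-(μ * y)) * ((y - a) * G y) := by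
    intro y hy
    rw [(hHHas y).deriv, hu_ode y hy, hv_ode y hy]
    simp only [hh_def, hG'v, hG_def, ha_def]
    ring
  have hH_mono : StrictMonoOn H (Ici a) := by
    apply strictMonoOn_of_deriv_pos (convex_Ici a) hH_diff.continuous.continuousOn
    intro x hx
    rw [interior_Ici] at hx
    have hx0 : (0:ℝ) ≤ x := le_trans ha hx.le
    rw [hH_deriv x hx0]
    exact mul_pos (Real.exp_pos _) (mul_pos (by rw [mem_Ioi] at hx; linarith) (hG_pos x hx0))
  have hψ_fun : ψ = fun x => Real.exp (μ * x) * G (a + x) := by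
    funext x
    rw [hψ x]
  have hψHas : ∀ x : ℝ, HasDerivAt ψ
      (Real.exp (μ * x) * μ * G (a + x) + Real.exp (μ * x) * (deriv G (a + x) * 1)) x := by
    intro x
    rw [hψ_fun]
    have h1 : HasDerivAt (fun x : ℝ => μ * x) μ x := by
      simpa using (hasDerivAt_id x).const_mul μ
    have h2 : HasDerivAt (fun x : ℝ => a + x) 1 x := by
      simpa using (hasDerivAt_id x).const_add a
    have h3 : HasDerivAt (fun x : ℝ => G (a + x)) (deriv G (a + x) * 1) x :=
      (hGd (a + x)).comp x h2
    exact (h1.exp).mul h3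
  have hψ_deriv : ∀ x : ℝ, deriv ψ x = Real.exp (μ * x) * h (a + x) := by
    intro x
    rw [(hψHas x).deriv]
    simp only [hh_def]
    ring
  constructor
  · rw [hψ_deriv 0, add_zero, hha, mul_zero]
  · intro x hx
    rw [hψ_deriv x]
    have hmem : a + x ∈ Ici a := mem_Ici.mpr (by linarith)
    have hlt : a < a + x := by linarith
    have hH0 : H a = 0 := by
      show Real.exp (-(μ * a)) * h a = 0
      rw [hha, mul_zero]
    have := hH_mono self_mem_Ici hmem hlt
    rw [hH0] at this
    have hhx : 0 < h (a + x) := by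
      have hepos := Real.exp_pos (-(μ * (a + x)))
      have hHval : H (a + x) = Real.exp (-(μ * (a + x))) * h (a + x) := rfl
      nlinarith
    exact mul_pos (Real.exp_pos _) hhx
end

section
/- Let μ ≥ 0 and let Φ, Ψ : [0,∞) → ℝ be twice continuously differentiable with Φ''(x) + 2μΦ'(x) − xΦ(x) = 0 and Ψ''(x) + 2μΨ'(x) − xΨ(x) = 0 for all x ≥ 0. Set φ(x) := e^{2μx}Φ(x) and ψ(x) := e^{2μx}Ψ(x), and assume: (a) φ(x)Ψ'(x) − ψ(x)Φ'(x) = 1 for all x ≥ 0; (b) Φ(y) → 0, y·Φ(y) → 0 and y·Φ'(y) → 0 as y → ∞; (c) the functions y ↦ Φ(y) and y ↦ y²·Φ(y) are Lebesgue integrable on [0,∞). Then for every x ≥ 0: φ(x)·∫₀ˣ y²Ψ(y) dy + ψ(x)·∫ₓ^∞ y²Φ(y) dy = x + φ(x)·Ψ(0) − 2μ·( φ(x)·∫₀ˣ Ψ(y) dy + ψ(x)·∫ₓ^∞ Φ(y) dy ). -/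
open Real Filter Set MeasureTheory

/-- Integration-by-parts identity for the expected killing position of
reflecting Brownian motion with drift `−μ` killed at rate `x/2`.  Here `Φ, Ψ` solve
`w'' + 2μw' − xw = 0` on `[0,∞)`, `φ = e^{2μx}Φ`, `ψ = e^{2μx}Ψ`, the (normalized)
Wronskian identity (a) holds, `Φ` decays suitably at infinity (b), and `Φ`, `y²Φ`
are integrable (c).  Then
`φ(x)∫₀ˣ y²Ψ + ψ(x)∫ₓ^∞ y²Φ = x + φ(x)Ψ(0) − 2μ(φ(x)∫₀ˣΨ + ψ(x)∫ₓ^∞Φ)`. -/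
theorem expected_killing_position_identity (μ : ℝ) (hμ : 0 ≤ μ) (Φ Ψ : ℝ → ℝ)
    (hΦ : ContDiff ℝ 2 Φ) (hΨ : ContDiff ℝ 2 Ψ)
    (hΦ_ode : ∀ x ≥ (0:ℝ), deriv (deriv Φ) x + 2 * μ * deriv Φ x - x * Φ x = 0)
    (hΨ_ode : ∀ x ≥ (0:ℝ), deriv (deriv Ψ) x + 2 * μ * deriv Ψ x - x * Ψ x = 0)
    (φ ψ : ℝ → ℝ)
    (hφ : ∀ x, φ x = Real.exp (2 * μ * x) * Φ x)
    (hψ : ∀ x, ψ x = Real.exp (2 * μ * x) * Ψ x)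
    (hwr : ∀ x ≥ (0:ℝ), φ x * deriv Ψ x - ψ x * deriv Φ x = 1)
    (hΦ_lim : Tendsto Φ atTop (nhds 0))
    (hΦ_lim' : Tendsto (fun y => y * Φ y) atTop (nhds 0))
    (hΦ'_lim : Tendsto (fun y => y * deriv Φ y) atTop (nhds 0))
    (hΦ_int : IntegrableOn Φ (Set.Ici 0))
    (hΦ_int2 : IntegrableOn (fun y => y ^ 2 * Φ y) (Set.Ici 0)) :
    ∀ x ≥ (0:ℝ),
      φ x * (∫ y in (0:ℝ)..x, y ^ 2 * Ψ y) + ψ x * (∫ y in Set.Ioi x, y ^ 2 * Φ y)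
        = x + φ x * Ψ 0
          - 2 * μ * (φ x * (∫ y in (0:ℝ)..x, Ψ y) + ψ x * (∫ y in Set.Ioi x, Φ y)) := by
  intro x hx
  -- differentiability facts
  have hΦ2 : ContDiff ℝ (1+1) Φ := by norm_num; exact hΦ
  have hΨ2 : ContDiff ℝ (1+1) Ψ := by norm_num; exact hΨ
  have hΦd : Differentiable ℝ Φ := hΦ.differentiable (by norm_num)
  have hΨd : Differentiable ℝ Ψ := hΨ.differentiable (by norm_num)
  have hΦd' : Differentiable ℝ (deriv Φ) :=
    ((contDiff_succ_iff_deriv.mp hΦ2).2.2).differentiable (by norm_num)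
  have hΨd' : Differentiable ℝ (deriv Ψ) :=
    ((contDiff_succ_iff_deriv.mp hΨ2).2.2).differentiable (by norm_num)
  have hΦc' : Continuous (deriv Φ) := hΦd'.continuous
  have hΨc' : Continuous (deriv Ψ) := hΨd'.continuous
  have hΦc : Continuous Φ := hΦ.continuous
  have hΨc : Continuous Ψ := hΨ.continuous
  have hcg : Continuous (fun y => 2 * μ * Ψ y + y ^ 2 * Ψ y) :=
    (continuous_const.mul hΨc).add ((continuous_id.pow 2).mul hΨc)
  have hcg2 : Continuous (fun y : ℝ => y ^ 2 * Ψ y) := (continuous_id.pow 2).mul hΨc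
  have hcH : Continuous (fun y => y * (deriv Φ y + 2 * μ * Φ y) - Φ y) :=
    (continuous_id.mul (hΦc'.add (continuous_const.mul hΦc))).sub hΦc
  -- G y = y*(Ψ' y + 2μΨ y) − Ψ y, with G' y = 2μΨ y + y²Ψ y for y ≥ 0
  set G : ℝ → ℝ := fun y => y * (deriv Ψ y + 2 * μ * Ψ y) - Ψ y with hG
  have hGderiv : ∀ y ∈ Set.uIcc (0:ℝ) x,
      HasDerivAt G (2 * μ * Ψ y + y ^ 2 * Ψ y) y := by
    intro y hy
    have hy0 : 0 ≤ y := by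
      rcases Set.mem_uIcc.mp hy with h | h
      · exact h.1
      · exact le_trans hx h.1
    have h1 : HasDerivAt (fun y => y * (deriv Ψ y + 2 * μ * Ψ y) - Ψ y)
        (1 * (deriv Ψ y + 2 * μ * Ψ y)
          + y * (deriv (deriv Ψ) y + 2 * μ * deriv Ψ y) - deriv Ψ y) y := by
      exact ((hasDerivAt_id y).mul
        (((hΨd' y).hasDerivAt).add (((hΨd y).hasDerivAt).const_mul (2*μ)))).sub
        ((hΨd y).hasDerivAt)
    have hode := hΨ_ode y hy0
    convert h1 using 1
    have : deriv (deriv Ψ) y + 2 * μ * deriv Ψ y = y * Ψ y := by linarith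
    rw [this]; ring
  have hGint : IntervalIntegrable (fun y => 2 * μ * Ψ y + y ^ 2 * Ψ y) volume 0 x :=
    hcg.intervalIntegrable 0 x
  have key1' : (∫ y in (0:ℝ)..x, (2 * μ * Ψ y + y ^ 2 * Ψ y)) = G x - G 0 :=
    intervalIntegral.integral_eq_sub_of_hasDerivAt hGderiv hGint
  have hΨint : IntervalIntegrable Ψ volume 0 x :=
    hΨ.continuous.intervalIntegrable 0 x
  have hΨint2 : IntervalIntegrable (fun y => y ^ 2 * Ψ y) volume 0 x :=
    hcg2.intervalIntegrable 0 x
  have key1 : (∫ y in (0:ℝ)..x, y ^ 2 * Ψ y)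
      = G x - G 0 - 2 * μ * ∫ y in (0:ℝ)..x, Ψ y := by
    have := intervalIntegral.integral_add (hΨint.const_mul (2*μ)) hΨint2
    rw [intervalIntegral.integral_const_mul] at this
    rw [← key1', this]; ring
  -- H y = y*(Φ' y + 2μΦ y) − Φ y, with H' y = 2μΦ y + y²Φ y for y > x ≥ 0
  set H : ℝ → ℝ := fun y => y * (deriv Φ y + 2 * μ * Φ y) - Φ y with hH
  have hHderiv : ∀ y ∈ Set.Ioi x, HasDerivAt H (2 * μ * Φ y + y ^ 2 * Φ y) y := by
    intro y hy
    have hy0 : 0 ≤ y := le_trans hx (le_of_lt hy)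
    have h1 : HasDerivAt (fun y => y * (deriv Φ y + 2 * μ * Φ y) - Φ y)
        (1 * (deriv Φ y + 2 * μ * Φ y)
          + y * (deriv (deriv Φ) y + 2 * μ * deriv Φ y) - deriv Φ y) y := by
      exact ((hasDerivAt_id y).mul
        (((hΦd' y).hasDerivAt).add (((hΦd y).hasDerivAt).const_mul (2*μ)))).sub
        ((hΦd y).hasDerivAt)
    have hode := hΦ_ode y hy0
    convert h1 using 1
    have : deriv (deriv Φ) y + 2 * μ * deriv Φ y = y * Φ y := by linarith
    rw [this]; ring
  have hsub : Set.Ioi x ⊆ Set.Ici (0:ℝ) := fun y hy => le_trans hx (le_of_lt hy)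
  have hΦIoi : IntegrableOn Φ (Set.Ioi x) := hΦ_int.mono hsub le_rfl
  have hΦIoi2 : IntegrableOn (fun y => y ^ 2 * Φ y) (Set.Ioi x) :=
    hΦ_int2.mono hsub le_rfl
  have hHint : IntegrableOn (fun y => 2 * μ * Φ y + y ^ 2 * Φ y) (Set.Ioi x) :=
    (hΦIoi.const_mul (2*μ)).add hΦIoi2
  have hHlim : Tendsto H atTop (nhds 0) := by
    have : Tendsto (fun y => y * deriv Φ y + 2 * μ * (y * Φ y) - Φ y) atTop
        (nhds (0 + 2 * μ * 0 - 0)) :=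
      (hΦ'_lim.add (hΦ_lim'.const_mul (2*μ))).sub hΦ_lim
    simpa using this.congr (fun y => by ring)
  have hHcont : ContinuousWithinAt H (Set.Ici x) x := by
    exact hcH.continuousWithinAt
  have key2' : (∫ y in Set.Ioi x, (2 * μ * Φ y + y ^ 2 * Φ y)) = 0 - H x :=
    MeasureTheory.integral_Ioi_of_hasDerivAt_of_tendsto hHcont hHderiv hHint hHlim
  have key2 : (∫ y in Set.Ioi x, y ^ 2 * Φ y)
      = - H x - 2 * μ * ∫ y in Set.Ioi x, Φ y := by
    have := MeasureTheory.integral_add (hΦIoi.const_mul (2*μ)) hΦIoi2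
    rw [MeasureTheory.integral_const_mul] at this
    rw [show (∫ y in Set.Ioi x, y ^ 2 * Φ y)
        = (∫ y in Set.Ioi x, (2 * μ * Φ y + y ^ 2 * Φ y))
          - 2 * μ * ∫ y in Set.Ioi x, Φ y by rw [this]; ring, key2']
    ring
  -- combine
  have heq : φ x * Ψ x = ψ x * Φ x := by rw [hφ, hψ]; ring
  rw [key1, key2]
  simp only [hG, hH]
  linear_combination x * (hwr x hx) + (2 * μ * x - 1) * heq
end

section
/- Let μ ≥ 0 and suppose f, g : [0,∞) → ℝ are twice continuously differentiable, satisfy w''(x) + 2μw'(x) − x·w(x) = 0 for all x ≥ 0, and are positive and non-increasing on [0,∞). Then there exists a constant c > 0 with g(x) = c·f(x) for all x ≥ 0. -/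
open Real Filter Set Topology

lemma growth_aux {F : ℝ → ℝ} (hF : Differentiable ℝ F) {a b K : ℝ} (hab : a ≤ b)
    (hK : ∀ t ∈ Set.Icc a b, K ≤ deriv F t) : K * (b - a) ≤ F b - F a := by
  have hd : Differentiable ℝ (fun t : ℝ => F t - K * t) := by fun_prop
  have h1 : MonotoneOn (fun t => F t - K * t) (Set.Icc a b) := by
    apply monotoneOn_of_deriv_nonneg (convex_Icc a b) hd.continuous.continuousOn
      hd.differentiableOn
    intro x hx
    have hx' : x ∈ Set.Icc a b := interior_subset hx
    have : deriv (fun t => F t - K * t) x = deriv F x - K := by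
      rw [deriv_fun_sub (hF x) (by fun_prop), deriv_const_mul _ (by fun_prop), deriv_id'']
      ring
    rw [this]
    linarith [hK x hx']
  have := h1 (Set.left_mem_Icc.2 hab) (Set.right_mem_Icc.2 hab) hab
  simp only at this
  linarith

lemma no_bounded (μ : ℝ) (hμ : 0 ≤ μ) (h : ℝ → ℝ)
    (hd : Differentiable ℝ h) (hd' : Differentiable ℝ (deriv h))
    (hode : ∀ x ≥ (0:ℝ), deriv (deriv h) x + 2 * μ * deriv h x - x * h x = 0)
    (h0 : h 0 = 0) (h0' : 0 < deriv h 0) (M : ℝ) (hM : ∀ x ≥ (0:ℝ), h x ≤ M) : False := by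
  set u : ℝ → ℝ := fun x => Real.exp (2*μ*x) * deriv h x with hu_def
  have hud : Differentiable ℝ u := by
    exact ((Real.differentiable_exp.comp ((differentiable_id.const_mul (2*μ)))).mul hd')
  have hu0 : u 0 = deriv h 0 := by simp [hu_def]
  have hu' : ∀ x ≥ (0:ℝ), HasDerivAt u (Real.exp (2*μ*x) * (x * h x)) x := by
    intro x hx
    have he : HasDerivAt (fun x => Real.exp (2*μ*x)) (Real.exp (2*μ*x) * (2*μ)) x := by
      simpa using (HasDerivAt.exp (((hasDerivAt_id x).const_mul (2*μ))))
    have hmul := he.mul (hd'.differentiableAt.hasDerivAt (x := x))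
    have e2 : deriv (deriv h) x = x * h x - 2*μ*deriv h x := by linarith [hode x hx]
    have e : Real.exp (2*μ*x) * (2*μ) * deriv h x + Real.exp (2*μ*x) * deriv (deriv h) x
        = Real.exp (2*μ*x) * (x * h x) := by
      rw [e2]; ring
    rwa [e] at hmul
  -- h > 0 on (0, ∞)
  have hpos : ∀ x > (0:ℝ), 0 < h x := by
    by_contra hcon
    push_neg at hcon
    obtain ⟨x₀, hx₀, hx₀le⟩ := hcon
    -- positivity near 0
    have hslope : Tendsto (slope h 0) (𝓝[≠] 0) (𝓝 (deriv h 0)) :=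
      hasDerivAt_iff_tendsto_slope.1 (hd.differentiableAt.hasDerivAt)
    have hev : ∀ᶠ y in 𝓝[>] (0:ℝ), 0 < slope h 0 y :=
      (hslope.mono_left (nhdsWithin_mono _ (fun y hy => ne_of_gt hy))).eventually
        (eventually_gt_nhds h0')
    obtain ⟨ε, hε, hsub⟩ := mem_nhdsGT_iff_exists_Ioo_subset.1 hev
    have hεpos : (0:ℝ) < ε := hε
    have hnear : ∀ y ∈ Set.Ioo (0:ℝ) ε, 0 < h y := by
      intro y hy
      have hs : 0 < slope h 0 y := hsub hy
      rw [slope_def_field] at hs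
      simp only [h0, sub_zero] at hs
      have hyy := mul_pos hs hy.1
      rwa [div_mul_cancel₀ _ (ne_of_gt hy.1)] at hyy
    set S : Set ℝ := {x | ε/2 ≤ x ∧ h x ≤ 0} with hS_def
    have hSclosed : IsClosed S := by
      have : S = Set.Ici (ε/2) ∩ h ⁻¹' (Set.Iic 0) := by
        ext x; simp [hS_def, Set.mem_Ici, Set.mem_Iic, and_comm]
      rw [this]
      exact isClosed_Ici.inter (IsClosed.preimage hd.continuous isClosed_Iic)
    have hx₀ε : ε ≤ x₀ := by
      by_contra hlt
      push_neg at hlt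
      exact absurd hx₀le (not_le.2 (hnear x₀ ⟨hx₀, hlt⟩))
    have hSne : S.Nonempty := ⟨x₀, by constructor <;> [linarith; exact hx₀le]⟩
    have hSbdd : BddBelow S := ⟨ε/2, fun x hx => hx.1⟩
    set T := sInf S with hT_def
    have hTS : T ∈ S := hSclosed.csInf_mem hSne hSbdd
    have hTpos : 0 < T := lt_of_lt_of_le (by linarith) hTS.1
    have hposT : ∀ x ∈ Set.Ioo (0:ℝ) T, 0 < h x := by
      intro x hx
      rcases lt_or_ge x ε with hlt | hge
      · exact hnear x ⟨hx.1, hlt⟩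
      · by_contra hn
        push_neg at hn
        have : x ∈ S := ⟨by linarith, hn⟩
        exact absurd (csInf_le hSbdd this) (not_le.2 hx.2)
    have humono : MonotoneOn u (Set.Icc 0 T) := by
      apply monotoneOn_of_deriv_nonneg (convex_Icc 0 T) hud.continuous.continuousOn
        hud.differentiableOn
      intro x hx
      rw [interior_Icc] at hx
      rw [(hu' x hx.1.le).deriv]
      have := hposT x hx
      have hx0 : (0:ℝ) ≤ x := hx.1.le
      positivity
    have hderivpos : ∀ x ∈ Set.Icc (0:ℝ) T, 0 < deriv h x := by
      intro x hx
      have h1 : u 0 ≤ u x := humono (Set.left_mem_Icc.2 hTpos.le) hx hx.1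
      have h2 : 0 < Real.exp (2*μ*x) * deriv h x := by rw [hu0] at h1; exact lt_of_lt_of_le h0' h1
      have h3 : 0 < Real.exp (2*μ*x) := Real.exp_pos _
      nlinarith [h2, h3]
    have hmono : StrictMonoOn h (Set.Icc 0 T) := by
      apply strictMonoOn_of_deriv_pos (convex_Icc 0 T) hd.continuous.continuousOn
      intro x hx
      rw [interior_Icc] at hx
      exact hderivpos x ⟨hx.1.le, hx.2.le⟩
    have := hmono (Set.left_mem_Icc.2 hTpos.le) (Set.right_mem_Icc.2 hTpos.le) hTpos
    rw [h0] at this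
    linarith [hTS.2]
  -- global monotonicity
  have hnn : ∀ x ≥ (0:ℝ), 0 ≤ h x := by
    intro x hx
    rcases eq_or_lt_of_le hx with rfl | hlt
    · exact le_of_eq h0.symm
    · exact (hpos x hlt).le
  have humono : MonotoneOn u (Set.Ici 0) := by
    apply monotoneOn_of_deriv_nonneg (convex_Ici 0) hud.continuous.continuousOn
      hud.differentiableOn
    intro x hx
    rw [interior_Ici] at hx
    rw [(hu' x hx.le).deriv]
    have := (hpos x hx).le
    have hx0 : (0:ℝ) ≤ x := hx.le
    positivity
  have hderivpos : ∀ x ≥ (0:ℝ), 0 < deriv h x := by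
    intro x hx
    have h1 : u 0 ≤ u x := humono Set.self_mem_Ici hx hx
    have h2 : 0 < Real.exp (2*μ*x) * deriv h x := by rw [hu0] at h1; exact lt_of_lt_of_le h0' h1
    have h3 : 0 < Real.exp (2*μ*x) := Real.exp_pos _
    nlinarith [h2, h3]
  have hmonoh : MonotoneOn h (Set.Ici 0) := by
    apply monotoneOn_of_deriv_nonneg (convex_Ici 0) hd.continuous.continuousOn
      hd.differentiableOn
    intro x hx
    rw [interior_Ici] at hx
    exact (hderivpos x hx.le).le
  set δ := h 1 with hδ_def
  have hδpos : 0 < δ := hpos 1 one_pos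
  set δ₂ := Real.exp (-(2*μ)) * δ with hδ₂_def
  have hδ₂pos : 0 < δ₂ := by positivity
  -- deriv h x ≥ δ₂ for x ≥ 2
  have hstep : ∀ x ≥ (2:ℝ), δ₂ ≤ deriv h x := by
    intro x hx
    set K := Real.exp (2*μ*(x-1)) * ((x-1) * δ) with hK_def
    have hgrow : K * (x - (x-1)) ≤ u x - u (x-1) := by
      apply growth_aux hud (by linarith)
      intro t ht
      rw [(hu' t (by cases ht; linarith)).deriv]
      have h1 : Real.exp (2*μ*(x-1)) ≤ Real.exp (2*μ*t) :=
        Real.exp_le_exp.2 (by nlinarith [ht.1])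
      have h2 : (x-1) * δ ≤ t * h t := by
        have ht1 : (1:ℝ) ≤ t := by linarith [ht.1]
        have hht : δ ≤ h t := hmonoh (Set.mem_Ici.2 zero_le_one)
          (Set.mem_Ici.2 (by linarith)) ht1
        nlinarith [mul_nonneg (by linarith [ht.1] : (0:ℝ) ≤ t - (x-1)) hδpos.le,
          mul_nonneg (by linarith : (0:ℝ) ≤ t) (sub_nonneg.2 hht)]
      have h3 : (0:ℝ) ≤ (x-1) * δ := by nlinarith
      calc K ≤ Real.exp (2*μ*t) * ((x-1)*δ) := by
              exact mul_le_mul_of_nonneg_right h1 h3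
        _ ≤ Real.exp (2*μ*t) * (t * h t) := by
              exact mul_le_mul_of_nonneg_left h2 (Real.exp_pos _).le
    have hu1 : 0 < u (x-1) := by
      have := humono Set.self_mem_Ici (show x - 1 ∈ Set.Ici (0:ℝ) by simp; linarith)
        (by linarith)
      rw [hu0] at this; linarith
    have hux : K ≤ u x := by
      have : x - (x-1) = 1 := by ring
      rw [this, mul_one] at hgrow
      linarith
    -- K = exp(2μx) * (exp(-2μ) * (x-1) * δ)
    have hKeq : K = Real.exp (2*μ*x) * (Real.exp (-(2*μ)) * ((x-1) * δ)) := by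
      rw [hK_def, show 2*μ*(x-1) = 2*μ*x + -(2*μ) by ring, Real.exp_add]
      ring
    have hexp : 0 < Real.exp (2*μ*x) := Real.exp_pos _
    have hdx : Real.exp (-(2*μ)) * ((x-1) * δ) ≤ deriv h x := by
      have hux' : Real.exp (2*μ*x) * (Real.exp (-(2*μ)) * ((x-1) * δ))
          ≤ Real.exp (2*μ*x) * deriv h x := by rw [← hKeq]; exact hux
      exact le_of_mul_le_mul_left hux' hexp
    have : δ₂ ≤ Real.exp (-(2*μ)) * ((x-1) * δ) := by
      rw [hδ₂_def]
      have h1 : (1:ℝ) ≤ x - 1 := by linarith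
      nlinarith [Real.exp_pos (-(2*μ))]
    linarith
  -- now h grows linearly
  set X := 2 + (|M| + |h 2| + 1)/δ₂ with hX_def
  have hX2 : (2:ℝ) ≤ X := by
    have : 0 ≤ (|M| + |h 2| + 1)/δ₂ := by positivity
    rw [hX_def]; linarith
  have hgrow2 : δ₂ * (X - 2) ≤ h X - h 2 := by
    apply growth_aux hd hX2
    intro t ht
    exact hstep t ht.1
  have hXval : δ₂ * (X - 2) = |M| + |h 2| + 1 := by
    rw [hX_def]
    field_simp
    ring
  have h1 : M ≤ |M| := le_abs_self M
  have h2 : -|h 2| ≤ h 2 := neg_abs_le _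
  have h3 : h X ≤ M := hM X (by linarith)
  rw [hXval] at hgrow2
  linarith

/-- Up to a positive constant factor there is at most one positive
non-increasing solution of `w'' + 2μw' − xw = 0` on `[0,∞)`: if `f` and `g` are two
such solutions then `g = c·f` on `[0,∞)` for some `c > 0`. -/
theorem positive_decreasing_solution_unique (μ : ℝ) (hμ : 0 ≤ μ) (f g : ℝ → ℝ)
    (hf : ContDiff ℝ 2 f) (hg : ContDiff ℝ 2 g)
    (hf_ode : ∀ x ≥ (0:ℝ), deriv (deriv f) x + 2 * μ * deriv f x - x * f x = 0)
    (hg_ode : ∀ x ≥ (0:ℝ), deriv (deriv g) x + 2 * μ * deriv g x - x * g x = 0)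
    (hf_pos : ∀ x ≥ (0:ℝ), 0 < f x) (hg_pos : ∀ x ≥ (0:ℝ), 0 < g x)
    (hf_anti : AntitoneOn f (Set.Ici 0)) (hg_anti : AntitoneOn g (Set.Ici 0)) :
    ∃ c > (0:ℝ), ∀ x ≥ (0:ℝ), g x = c * f x := by
  have hfd : Differentiable ℝ f := hf.differentiable two_ne_zero
  have hgd : Differentiable ℝ g := hg.differentiable two_ne_zero
  have hfd' : Differentiable ℝ (deriv f) := by
    have h2 : ContDiff ℝ (1+1) f := by norm_num; exact hf
    exact ((contDiff_succ_iff_deriv.mp h2).2.2).differentiable one_ne_zero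
  have hgd' : Differentiable ℝ (deriv g) := by
    have h2 : ContDiff ℝ (1+1) g := by norm_num; exact hg
    exact ((contDiff_succ_iff_deriv.mp h2).2.2).differentiable one_ne_zero
  have hf0 : 0 < f 0 := hf_pos 0 le_rfl
  have hg0 : 0 < g 0 := hg_pos 0 le_rfl
  set c : ℝ := g 0 / f 0 with hc_def
  have hc : 0 < c := div_pos hg0 hf0
  have hgc : g 0 = c * f 0 := by rw [hc_def]; field_simp
  -- derivative computations for h := g - c*f
  have hder : deriv (fun x => g x - c * f x) = fun x => deriv g x - c * deriv f x := by
    funext x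
    rw [deriv_fun_sub (hgd x) ((hfd x).const_mul c), deriv_const_mul c (hfd x)]
  have hder2 : ∀ x, deriv (deriv (fun x => g x - c * f x)) x
      = deriv (deriv g) x - c * deriv (deriv f) x := by
    intro x
    rw [hder, deriv_fun_sub (hgd' x) ((hfd' x).const_mul c), deriv_const_mul c (hfd' x)]
  have hderneg : deriv (fun x => c * f x - g x) = fun x => c * deriv f x - deriv g x := by
    funext x
    rw [deriv_fun_sub ((hfd x).const_mul c) (hgd x), deriv_const_mul c (hfd x)]
  have hderneg2 : ∀ x, deriv (deriv (fun x => c * f x - g x)) x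
      = c * deriv (deriv f) x - deriv (deriv g) x := by
    intro x
    rw [hderneg, deriv_fun_sub ((hfd' x).const_mul c) (hgd' x), deriv_const_mul c (hfd' x)]
  -- deriv g 0 = c * deriv f 0
  have hkey : deriv g 0 = c * deriv f 0 := by
    by_contra hne
    rcases lt_or_gt_of_ne hne with hlt | hgt
    · -- deriv of (c*f - g) at 0 is positive
      apply no_bounded μ hμ (fun x => c * f x - g x)
        ((hfd.const_mul c).sub hgd) (by rw [hderneg]; exact (hfd'.const_mul c).sub hgd')
        ?_ (by simp [hgc]) ?_ (c * f 0) ?_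
      · intro x hx
        have h1 := hf_ode x hx
        have h2 := hg_ode x hx
        rw [hderneg2, hderneg]
        linear_combination c * h1 - h2
      · rw [hderneg]; simp only; linarith
      · intro x hx
        have h1 : f x ≤ f 0 := hf_anti Set.self_mem_Ici hx hx
        have h2 : 0 < g x := hg_pos x hx
        show c * f x - g x ≤ c * f 0
        nlinarith [mul_le_mul_of_nonneg_left h1 hc.le]
    · -- deriv of (g - c*f) at 0 is positive
      apply no_bounded μ hμ (fun x => g x - c * f x)
        (hgd.sub (hfd.const_mul c)) (by rw [hder]; exact hgd'.sub (hfd'.const_mul c))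
        ?_ (by simp [hgc]) ?_ (g 0) ?_
      · intro x hx
        have h1 := hf_ode x hx
        have h2 := hg_ode x hx
        rw [hder2, hder]
        linear_combination h2 - c * h1
      · rw [hder]; simp only; linarith
      · intro x hx
        have h1 : g x ≤ g 0 := hg_anti Set.self_mem_Ici hx hx
        have h2 : 0 < f x := hf_pos x hx
        show g x - c * f x ≤ g 0
        nlinarith [mul_pos hc h2]
  -- Wronskian vanishes on [0,∞)
  set W : ℝ → ℝ := fun x => f x * deriv g x - g x * deriv f x with hW_def
  have hWd : Differentiable ℝ W := (hfd.mul hgd').sub (hgd.mul hfd')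
  set V : ℝ → ℝ := fun x => Real.exp (2*μ*x) * W x with hV_def
  have hV' : ∀ x ≥ (0:ℝ), HasDerivAt V 0 x := by
    intro x hx
    have he : HasDerivAt (fun x => Real.exp (2*μ*x)) (Real.exp (2*μ*x) * (2*μ)) x := by
      simpa using (HasDerivAt.exp (((hasDerivAt_id x).const_mul (2*μ))))
    have hW' : HasDerivAt W (f x * deriv (deriv g) x - g x * deriv (deriv f) x) x := by
      have h1 := ((hfd.differentiableAt.hasDerivAt (x := x)).mul
        (hgd'.differentiableAt.hasDerivAt (x := x)))
      have h2 := ((hgd.differentiableAt.hasDerivAt (x := x)).mul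
        (hfd'.differentiableAt.hasDerivAt (x := x)))
      have h3 := h1.sub h2
      exact h3.congr_deriv (by ring)
    have := he.mul hW'
    have e : Real.exp (2*μ*x) * (2*μ) * W x
        + Real.exp (2*μ*x) * (f x * deriv (deriv g) x - g x * deriv (deriv f) x) = 0 := by
      have h1 := hf_ode x hx
      have h2 := hg_ode x hx
      have e1 : deriv (deriv f) x = x * f x - 2*μ*deriv f x := by linarith
      have e2 : deriv (deriv g) x = x * g x - 2*μ*deriv g x := by linarith
      rw [e1, e2, hW_def]
      ring
    rwa [e] at this
  have hW0 : W 0 = 0 := by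
    rw [hW_def]
    simp only
    rw [hkey, hgc]
    ring
  have hWzero : ∀ x ≥ (0:ℝ), W x = 0 := by
    intro x hx
    have hc1 : ContinuousOn V (Set.Icc 0 x) :=
      (((Real.continuous_exp.comp (continuous_const.mul continuous_id)).mul
        hWd.continuous)).continuousOn
    have := constant_of_has_deriv_right_zero hc1
      (fun y hy => (hV' y hy.1).hasDerivWithinAt) x (Set.right_mem_Icc.2 hx)
    have hV0 : V 0 = 0 := by rw [hV_def]; simp [hW0]
    rw [hV0] at this
    have hVx : Real.exp (2*μ*x) * W x = 0 := this
    have := Real.exp_pos (2*μ*x)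
    nlinarith [hVx]
  -- ratio is constant
  have hr : ∀ x ≥ (0:ℝ), HasDerivAt (fun y => g y / f y) 0 x := by
    intro x hx
    have hfx : f x ≠ 0 := (hf_pos x hx).ne'
    have h1 := (hgd.differentiableAt.hasDerivAt (x := x)).div
      (hfd.differentiableAt.hasDerivAt (x := x)) hfx
    have e : (deriv g x * f x - g x * deriv f x) / f x ^ 2 = 0 := by
      have := hWzero x hx
      rw [hW_def] at this
      simp only at this
      have : deriv g x * f x - g x * deriv f x = 0 := by linarith
      rw [this, zero_div]
    rwa [e] at h1
  refine ⟨c, hc, fun x hx => ?_⟩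
  have hc1 : ContinuousOn (fun y => g y / f y) (Set.Icc 0 x) := by
    apply ContinuousOn.div hgd.continuous.continuousOn hfd.continuous.continuousOn
    intro y hy
    exact (hf_pos y hy.1).ne'
  have := constant_of_has_deriv_right_zero hc1
    (fun y hy => (hr y hy.1).hasDerivWithinAt) x (Set.right_mem_Icc.2 hx)
  have hfx : f x ≠ 0 := (hf_pos x hx).ne'
  rw [div_eq_iff hfx] at this
  rw [this, hc_def]
end

section
/- Let μ, γ > 0, set a := −γ²/(4μ³) and p(x) := γ/μ^{3/2} + √μ·x. Suppose f : ℝ → ℝ is twice continuously differentiable and satisfies Kummer's equation t·f''(t) + (1/2 − t)·f'(t) − a·f(t) = 0 for all t ≥ γ²/μ³. Then the function F(x) := e^{−γx/μ}·f(p(x)²) satisfies (1/2)·F''(x) − μx·F'(x) − γx·F(x) = 0 for all x ≥ 0. -/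
open Real Filter Set

lemma alg_helper (μ γ s c x E ft f1 f2 : ℝ) (hs : s ≠ 0)
    (hs2 : s ^ 2 = μ) (hcs : c * s * μ = γ)
    (hK : (c + s * x) ^ 2 * f2 + (1/2 - (c + s * x) ^ 2) * f1
      - (-(γ ^ 2 / (4 * μ ^ 3))) * ft = 0) :
    1/2 * (E * (-(γ / μ) * (-(γ / μ) * ft + 2 * (c + s * x) * s * f1)
        + (-(γ / μ) * (f1 * (2 * (c + s * x) * s))
          + (2 * s * s * f1 + 2 * (c + s * x) * s * (f2 * (2 * (c + s * x) * s))))))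
      - μ * x * (E * (-(γ / μ) * ft + 2 * (c + s * x) * s * f1))
      - γ * x * (E * ft) = 0 := by
  subst hs2; subst hcs
  have e1 : (c * s * s ^ 2) ^ 2 / (4 * (s ^ 2) ^ 3) = c ^ 2 / 4 := by
    field_simp
  have e2 : c * s * s ^ 2 / s ^ 2 = c * s := by field_simp
  rw [e1] at hK
  rw [e2]
  linear_combination (2 * s ^ 2 * E) * hK


/-- If `f` solves Kummer's equation `t f'' + (1/2 − t) f' − a f = 0` with
`a = −γ²/(4μ³)` for all `t ≥ γ²/μ³`, then with `p(x) = γ/μ^{3/2} + √μ·x` the function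
`F(x) = e^{−γx/μ} f(p(x)²)` satisfies `(1/2)F'' − μx F' − γx F = 0` on `[0,∞)`. -/
theorem kummer_to_killed_OU (μ γ : ℝ) (hμ : 0 < μ) (hγ : 0 < γ) (f : ℝ → ℝ)
    (hf : ContDiff ℝ 2 f)
    (hode : ∀ t ≥ γ ^ 2 / μ ^ 3,
      t * deriv (deriv f) t + (1/2 - t) * deriv f t
        - (-(γ ^ 2 / (4 * μ ^ 3))) * f t = 0)
    (F : ℝ → ℝ)
    (hF : ∀ x, F x = Real.exp (-(γ * x / μ)) *
      f ((γ / μ ^ ((3:ℝ)/2) + Real.sqrt μ * x) ^ 2)) :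
    ∀ x ≥ (0:ℝ),
      (1/2) * deriv (deriv F) x - μ * x * deriv F x - γ * x * F x = 0 := by
  set s := Real.sqrt μ with hsdef
  set c := γ / μ ^ ((3:ℝ)/2) with hcdef
  have hs2 : s ^ 2 = μ := Real.sq_sqrt hμ.le
  have hspos : 0 < s := Real.sqrt_pos.mpr hμ
  have hcpos : 0 < c := div_pos hγ (Real.rpow_pos_of_pos hμ _)
  have hcs : c * s = γ / μ := by
    rw [hcdef, hsdef, Real.sqrt_eq_rpow, show ((3:ℝ)/2) = 1 + 1/2 by norm_num,
      Real.rpow_add hμ, Real.rpow_one]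
    have h : (μ:ℝ) ^ ((1:ℝ)/2) ≠ 0 := (Real.rpow_pos_of_pos hμ _).ne'
    field_simp
  have hfd : Differentiable ℝ f := hf.differentiable (by norm_num)
  have hf'd : Differentiable ℝ (deriv f) := by
    have := (contDiff_succ_iff_deriv.mp (show ContDiff ℝ (1+1) f from hf)).2.2
    exact this.differentiable (by norm_num)
  -- inner function q
  have hq : ∀ y : ℝ, HasDerivAt (fun y => (c + s * y) ^ 2) (2 * (c + s * y) * s) y := by
    intro y
    have h1 : HasDerivAt (fun y : ℝ => c + s * y) s y := by
      simpa using ((hasDerivAt_id y).const_mul s).const_add c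
    simpa [mul_comm] using h1.fun_pow 2
  have hE : ∀ y : ℝ, HasDerivAt (fun y => Real.exp (-(γ * y / μ)))
      (Real.exp (-(γ * y / μ)) * (-(γ / μ))) y := by
    intro y
    have h1 : HasDerivAt (fun y : ℝ => -(γ * y / μ)) (-(γ / μ)) y := by
      have h2 : HasDerivAt (fun y : ℝ => γ * y / μ) (γ / μ) y := by
        simpa using ((hasDerivAt_id y).const_mul γ).div_const μ
      simpa using h2.fun_neg
    simpa using h1.exp
  have hfq : ∀ y : ℝ, HasDerivAt (fun y => f ((c + s * y) ^ 2))
      (deriv f ((c + s * y) ^ 2) * (2 * (c + s * y) * s)) y := by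
    intro y
    exact ((hfd _).hasDerivAt).comp y (hq y)
  have hf'q : ∀ y : ℝ, HasDerivAt (fun y => deriv f ((c + s * y) ^ 2))
      (deriv (deriv f) ((c + s * y) ^ 2) * (2 * (c + s * y) * s)) y := by
    intro y
    exact ((hf'd _).hasDerivAt).comp y (hq y)
  -- first derivative of F
  have hF1 : ∀ y : ℝ, HasDerivAt F
      (Real.exp (-(γ * y / μ)) * ((-(γ / μ)) * f ((c + s * y) ^ 2)
        + (2 * (c + s * y) * s) * deriv f ((c + s * y) ^ 2))) y := by
    intro y
    have hFfun : F = fun y => Real.exp (-(γ * y / μ)) * f ((c + s * y) ^ 2) := funext hF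
    rw [hFfun]
    have := (hE y).fun_mul (hfq y)
    refine this.congr_deriv ?_
    ring
  have hdF : deriv F = fun y => Real.exp (-(γ * y / μ)) * ((-(γ / μ)) * f ((c + s * y) ^ 2)
      + (2 * (c + s * y) * s) * deriv f ((c + s * y) ^ 2)) :=
    funext fun y => (hF1 y).deriv
  -- second derivative
  have hF2 : ∀ y : ℝ, HasDerivAt (deriv F)
      (Real.exp (-(γ * y / μ)) * ((-(γ / μ)) *
          ((-(γ / μ)) * f ((c + s * y) ^ 2) + (2 * (c + s * y) * s) * deriv f ((c + s * y) ^ 2))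
        + ((-(γ / μ)) * (deriv f ((c + s * y) ^ 2) * (2 * (c + s * y) * s))
          + ((2 * s * s) * deriv f ((c + s * y) ^ 2)
            + (2 * (c + s * y) * s) * (deriv (deriv f) ((c + s * y) ^ 2) * (2 * (c + s * y) * s)))))) y := by
    intro y
    rw [hdF]
    have hH : HasDerivAt (fun y => (-(γ / μ)) * f ((c + s * y) ^ 2)
        + (2 * (c + s * y) * s) * deriv f ((c + s * y) ^ 2))
        ((-(γ / μ)) * (deriv f ((c + s * y) ^ 2) * (2 * (c + s * y) * s))
          + ((2 * s * s) * deriv f ((c + s * y) ^ 2)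
            + (2 * (c + s * y) * s) * (deriv (deriv f) ((c + s * y) ^ 2) * (2 * (c + s * y) * s)))) y := by
      have hlin : HasDerivAt (fun y : ℝ => 2 * (c + s * y) * s) (2 * s * s) y := by
        have h1 : HasDerivAt (fun y : ℝ => c + s * y) s y := by
          simpa using ((hasDerivAt_id y).const_mul s).const_add c
        simpa [mul_comm, mul_assoc] using (h1.const_mul 2).mul_const s
      exact ((hfq y).const_mul _).add (hlin.mul (hf'q y))
    have := (hE y).fun_mul hH
    refine this.congr_deriv ?_
    ring
  have hddF : ∀ y : ℝ, deriv (deriv F) y = Real.exp (-(γ * y / μ)) * ((-(γ / μ)) *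
          ((-(γ / μ)) * f ((c + s * y) ^ 2) + (2 * (c + s * y) * s) * deriv f ((c + s * y) ^ 2))
        + ((-(γ / μ)) * (deriv f ((c + s * y) ^ 2) * (2 * (c + s * y) * s))
          + ((2 * s * s) * deriv f ((c + s * y) ^ 2)
            + (2 * (c + s * y) * s) * (deriv (deriv f) ((c + s * y) ^ 2) * (2 * (c + s * y) * s))))) :=
    fun y => (hF2 y).deriv
  intro x hx
  have ht : (c + s * x) ^ 2 ≥ γ ^ 2 / μ ^ 3 := by
    have hc2 : c ^ 2 = γ ^ 2 / μ ^ 3 := by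
      have h1 : (c * s) ^ 2 = (γ / μ) ^ 2 := by rw [hcs]
      have hμ' : μ ≠ 0 := hμ.ne'
      field_simp at h1 ⊢
      nlinarith [hs2]
    nlinarith [mul_nonneg hspos.le hx, hcpos.le]
  have hK := hode ((c + s * x) ^ 2) ht
  have hdFx : ∀ y : ℝ, deriv F y = Real.exp (-(γ * y / μ)) * ((-(γ / μ)) * f ((c + s * y) ^ 2)
      + (2 * (c + s * y) * s) * deriv f ((c + s * y) ^ 2)) := fun y => (hF1 y).deriv
  have hγμ : c * s * μ = γ := by
    rw [hcs]; field_simp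
  rw [hddF x, hdFx x, hF x]
  exact alg_helper μ γ s c x (Real.exp (-(γ * x / μ))) (f ((c + s * x) ^ 2))
    (deriv f ((c + s * x) ^ 2)) (deriv (deriv f) ((c + s * x) ^ 2)) hspos.ne' hs2 hγμ hK
end

section
/- Let μ, γ > 0 and let u : [0,∞) → ℝ be twice continuously differentiable with (1/2)·u''(x) − μx·u'(x) − γx·u(x) = 0 for all x ≥ 0, u(0) > 0, and u(x) → 0 as x → ∞. Then u(x) > 0 for all x ≥ 0, u''(x) > 0 for all x > 0, and u'(x) < 0 for all x > 0; in particular u is strictly decreasing on [0,∞). -/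
open Real Filter Set

/-- Any twice continuously differentiable solution of
`(1/2)u'' − μxu' − γxu = 0` on `[0,∞)` with `u(0) > 0` and `u(x) → 0` at infinity is
positive on `[0,∞)`, convex (`u'' > 0`) and strictly decreasing (`u' < 0`) on `(0,∞)`;
in particular `u` is strictly decreasing on `[0,∞)`. -/
theorem killed_OU_decreasing_solution (μ γ : ℝ) (hμ : 0 < μ) (hγ : 0 < γ)
    (u : ℝ → ℝ) (hu : ContDiff ℝ 2 u)
    (hode : ∀ x ≥ (0:ℝ),
      (1/2) * deriv (deriv u) x - μ * x * deriv u x - γ * x * u x = 0)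
    (h0 : 0 < u 0) (hlim : Tendsto u atTop (nhds 0)) :
    (∀ x ≥ (0:ℝ), 0 < u x) ∧
    (∀ x > (0:ℝ), 0 < deriv (deriv u) x) ∧
    (∀ x > (0:ℝ), deriv u x < 0) ∧
    StrictAntiOn u (Set.Ici 0) := by
  -- Basic regularity
  have hu1 : ContDiff ℝ 1 (deriv u) := by
    have h2 : (2 : WithTop ℕ∞) = 1 + 1 := by norm_num
    rw [h2] at hu
    exact (contDiff_succ_iff_deriv.mp hu).2.2
  have hd1 : Differentiable ℝ u := hu.differentiable two_ne_zero
  have hd2 : Differentiable ℝ (deriv u) := hu1.differentiable one_ne_zero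
  have hc2 : Continuous (deriv (deriv u)) := hu1.continuous_deriv le_rfl
  have hode' : ∀ x ≥ (0:ℝ),
      deriv (deriv u) x = 2*μ*x*deriv u x + 2*γ*x*u x := by
    intro x hx
    have := hode x hx
    linarith
  -- derivative of the gaussian weight
  have hE : ∀ x : ℝ, HasDerivAt (fun y : ℝ => Real.exp (-(μ * y^2)))
      (Real.exp (-(μ*x^2)) * (-(μ*(2*x)))) x := by
    intro x
    exact (((hasDerivAt_pow 2 x).const_mul μ).neg.exp).congr_deriv (by simp only [Pi.neg_apply]; ring_nf)
  have hEmono : ∀ a b : ℝ, 0 ≤ a → a ≤ b →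
      Real.exp (-(μ * b^2)) ≤ Real.exp (-(μ * a^2)) := by
    intro a b ha hab
    apply Real.exp_le_exp.mpr
    nlinarith [mul_nonneg (mul_nonneg (sub_nonneg.mpr hab) (by linarith : (0:ℝ) ≤ a + b)) hμ.le]
  -- p = exp(-μx²) * u'
  have hp : ∀ x : ℝ, HasDerivAt (fun y => Real.exp (-(μ * y^2)) * deriv u y)
      (Real.exp (-(μ*x^2)) * (deriv (deriv u) x - 2*μ*x*deriv u x)) x := by
    intro x
    exact ((hE x).mul (hd2 x).hasDerivAt).congr_deriv (by ring)
  have hpd : ∀ x ≥ (0:ℝ), deriv (fun y => Real.exp (-(μ * y^2)) * deriv u y) x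
      = Real.exp (-(μ*x^2)) * (2*γ*x*u x) := by
    intro x hx
    rw [(hp x).deriv, hode' x hx]
    ring
  -- STEP 1 : u ≥ 0 on [0,∞)
  have hnn : ∀ x ≥ (0:ℝ), 0 ≤ u x := by
    by_contra hcon
    push_neg at hcon
    obtain ⟨x1, hx1, hux1⟩ := hcon
    have hev : ∀ᶠ x in atTop, u x1 / 2 < u x :=
      hlim.eventually (eventually_gt_nhds (by linarith))
    obtain ⟨R, hR⟩ := eventually_atTop.mp hev
    set R' := max R x1 with hR'def
    have hR'0 : (0:ℝ) ≤ R' := le_trans hx1 (le_max_right R x1)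
    obtain ⟨c, hcmem, hcmin⟩ := isCompact_Icc.exists_isMinOn
      (Set.nonempty_Icc.mpr hR'0) hd1.continuous.continuousOn
    have hcu : u c ≤ u x1 := hcmin ⟨hx1, le_max_right R x1⟩
    have hc0 : 0 < c := by
      rcases lt_or_eq_of_le hcmem.1 with h | h
      · exact h
      · exfalso; rw [← h] at hcu; linarith
    have hcR : c < R := by
      by_contra h
      push_neg at h
      have := hR c h
      linarith
    have hcR' : c < R' := lt_of_lt_of_le hcR (le_max_left R x1)
    have hloc : IsLocalMin u c :=
      hcmin.isLocalMin (Icc_mem_nhds hc0 hcR')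
    have hderiv0 : deriv u c = 0 := hloc.deriv_eq_zero
    have hsec : deriv (deriv u) c < 0 := by
      rw [hode' c hc0.le, hderiv0]
      nlinarith [mul_pos (mul_pos hγ hc0) (show 0 < -u c by linarith)]
    have hO : IsOpen {x : ℝ | deriv (deriv u) x < 0} :=
      isOpen_lt hc2 continuous_const
    obtain ⟨δ, hδ, hball⟩ := Metric.isOpen_iff.mp hO c hsec
    have hmin : 0 < min δ (R' - c) := lt_min hδ (by linarith)
    set b := c + min δ (R' - c) / 2 with hbdef
    have hb1 : c < b := by
      rw [hbdef]; linarith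
    have hbR' : b ≤ R' := by
      have h1 : min δ (R' - c) ≤ R' - c := min_le_right _ _
      rw [hbdef]; linarith
    have hbball : Icc c b ⊆ Metric.ball c δ := by
      intro x hx
      have h1 : min δ (R' - c) ≤ δ := min_le_left _ _
      rw [Metric.mem_ball, Real.dist_eq, abs_lt]
      constructor
      · have := hx.1; linarith
      · have := hx.2; rw [hbdef] at this; linarith
    have hanti2 : StrictAntiOn (deriv u) (Icc c b) := by
      apply strictAntiOn_of_deriv_neg (convex_Icc c b) hd2.continuous.continuousOn
      intro x hx
      rw [interior_Icc] at hx
      exact hball (hbball ⟨hx.1.le, hx.2.le⟩)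
    have hneg : ∀ x ∈ Ioo c b, deriv u x < 0 := by
      intro x hx
      have := hanti2 (left_mem_Icc.mpr hb1.le) ⟨hx.1.le, hx.2.le⟩ hx.1
      rw [hderiv0] at this
      exact this
    have hanti3 : StrictAntiOn u (Icc c b) := by
      apply strictAntiOn_of_deriv_neg (convex_Icc c b) hd1.continuous.continuousOn
      intro x hx
      rw [interior_Icc] at hx
      exact hneg x hx
    have hub : u b < u c :=
      hanti3 (left_mem_Icc.mpr hb1.le) (right_mem_Icc.mpr hb1.le) hb1
    have : u c ≤ u b := hcmin ⟨by linarith [hc0.le], hbR'⟩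
    linarith
  -- p is monotone on [0,∞)
  have hpdiff : Differentiable ℝ (fun y => Real.exp (-(μ * y^2)) * deriv u y) :=
    fun x => (hp x).differentiableAt
  have pmono : MonotoneOn (fun y => Real.exp (-(μ * y^2)) * deriv u y) (Ici 0) := by
    apply monotoneOn_of_deriv_nonneg (convex_Ici 0) hpdiff.continuous.continuousOn
      hpdiff.differentiableOn
    intro x hx
    rw [interior_Ici] at hx
    rw [hpd x hx.le]
    have h1 := hnn x hx.le
    have h2 := (Real.exp_pos (-(μ*x^2))).le
    exact mul_nonneg h2
      (mul_nonneg (mul_nonneg (mul_nonneg (by norm_num : (0:ℝ) ≤ 2) hγ.le) hx.le) h1)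
  -- STEP 2 : u' ≤ 0 on [0,∞)
  have hds : ∀ x ≥ (0:ℝ), deriv u x ≤ 0 := by
    by_contra hcon
    push_neg at hcon
    obtain ⟨x1, hx1, hpos⟩ := hcon
    have hlow : ∀ x ≥ x1, deriv u x1 ≤ deriv u x := by
      intro x hx
      have h1 : Real.exp (-(μ*x1^2)) * deriv u x1 ≤ Real.exp (-(μ*x^2)) * deriv u x :=
        pmono hx1 (hx1.trans hx) hx
      have e1 : Real.exp (-(μ*x^2)) ≤ Real.exp (-(μ*x1^2)) := hEmono x1 x hx1 hx
      have ha : 0 < Real.exp (-(μ*x1^2)) := Real.exp_pos _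
      have hb : 0 < Real.exp (-(μ*x^2)) := Real.exp_pos _
      have hux : 0 < deriv u x := by
        by_contra h
        push_neg at h
        nlinarith [mul_pos ha hpos, mul_nonpos_of_nonneg_of_nonpos hb.le h]
      have h2 : Real.exp (-(μ*x^2)) * deriv u x ≤ Real.exp (-(μ*x1^2)) * deriv u x :=
        mul_le_mul_of_nonneg_right e1 hux.le
      exact le_of_mul_le_mul_left (h1.trans h2) ha
    have hder : ∀ x : ℝ, HasDerivAt (fun x => u x - deriv u x1 * x)
        (deriv u x - deriv u x1) x := fun x =>
      ((hd1 x).hasDerivAt.sub ((hasDerivAt_id x).const_mul (deriv u x1))).congr_deriv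
        (by ring)
    have hgdiff : Differentiable ℝ (fun x => u x - deriv u x1 * x) :=
      fun x => (hder x).differentiableAt
    have hg : MonotoneOn (fun x => u x - deriv u x1 * x) (Ici x1) := by
      apply monotoneOn_of_deriv_nonneg (convex_Ici x1)
        hgdiff.continuous.continuousOn hgdiff.differentiableOn
      intro x hx
      rw [interior_Ici] at hx
      rw [(hder x).deriv]
      linarith [hlow x hx.le]
    obtain ⟨N, hN⟩ := eventually_atTop.mp (hlim.eventually (eventually_lt_nhds one_pos))
    set X := max N x1 + (|u x1| + 2) / deriv u x1 with hXdef
    have hq0 : 0 < (|u x1| + 2) / deriv u x1 := by positivity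
    have hX1 : x1 ≤ X := le_trans (le_max_right N x1) (by rw [hXdef]; linarith)
    have hXN : N ≤ X := le_trans (le_max_left N x1) (by rw [hXdef]; linarith)
    have hgX : u x1 - deriv u x1 * x1 ≤ u X - deriv u x1 * X :=
      hg self_mem_Ici hX1 hX1
    have hXx1 : (|u x1| + 2) / deriv u x1 ≤ X - x1 := by
      have := le_max_right N x1
      rw [hXdef]; linarith
    have key : |u x1| + 2 ≤ deriv u x1 * (X - x1) := by
      have := (div_le_iff₀ hpos).mp hXx1
      linarith
    have := hN X hXN
    have habs := neg_abs_le (u x1)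
    nlinarith
  -- STEP 3 : u > 0 on [0,∞)
  have hupos : ∀ x ≥ (0:ℝ), 0 < u x := by
    intro x0 hx0
    rcases lt_or_eq_of_le hx0 with h | h
    · by_contra hcon
      push_neg at hcon
      have hu0 : u x0 = 0 := le_antisymm hcon (hnn x0 hx0)
      have hloc : IsLocalMin u x0 := by
        filter_upwards [Ioi_mem_nhds h] with y hy
        rw [hu0]
        exact hnn y hy.le
      have hd0 : deriv u x0 = 0 := hloc.deriv_eq_zero
      set K := 1 + 2*γ*x0 with hKdef
      have hG : ∀ x : ℝ, HasDerivAt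
          (fun y => ((u y)^2 + (deriv u y)^2) * Real.exp (K * y))
          ((2*u x*deriv u x + 2*deriv u x*deriv (deriv u) x
            + K * ((u x)^2 + (deriv u x)^2)) * Real.exp (K*x)) x := by
        intro x
        have hF : HasDerivAt (fun y => (u y)^2 + (deriv u y)^2)
            (2*u x*deriv u x + 2*deriv u x*deriv (deriv u) x) x := by
          exact (((hd1 x).hasDerivAt.pow 2).add ((hd2 x).hasDerivAt.pow 2)).congr_deriv
            (by push_cast; ring)
        have hExp : HasDerivAt (fun y => Real.exp (K * y)) (Real.exp (K*x) * K) x := by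
          simpa using ((hasDerivAt_id x).const_mul K).exp
        exact (hF.mul hExp).congr_deriv (by ring)
      have hGdiff : Differentiable ℝ
          (fun y => ((u y)^2 + (deriv u y)^2) * Real.exp (K * y)) :=
        fun x => (hG x).differentiableAt
      have hGmono : MonotoneOn
          (fun y => ((u y)^2 + (deriv u y)^2) * Real.exp (K * y)) (Icc 0 x0) := by
        apply monotoneOn_of_deriv_nonneg (convex_Icc 0 x0)
          hGdiff.continuous.continuousOn hGdiff.differentiableOn
        intro x hx
        rw [interior_Icc] at hx
        rw [(hG x).deriv, hode' x hx.1.le]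
        apply mul_nonneg _ (Real.exp_pos _).le
        nlinarith [sq_nonneg (u x + deriv u x),
          mul_nonneg (mul_nonneg hγ.le hx.1.le) (sq_nonneg (u x + deriv u x)),
          mul_nonneg (mul_nonneg hγ.le (sub_nonneg.mpr hx.2.le))
            (add_nonneg (sq_nonneg (u x)) (sq_nonneg (deriv u x))),
          mul_nonneg (mul_nonneg hμ.le hx.1.le) (sq_nonneg (deriv u x))]
      have hG0 : ((u 0)^2 + (deriv u 0)^2) * Real.exp (K * 0)
          ≤ ((u x0)^2 + (deriv u x0)^2) * Real.exp (K * x0) :=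
        hGmono (left_mem_Icc.mpr h.le) (right_mem_Icc.mpr h.le) h.le
      rw [hu0, hd0] at hG0
      have h1 : 0 < ((u 0)^2 + (deriv u 0)^2) * Real.exp (K * 0) := by
        have h2 : (0:ℝ) < (u 0)^2 + (deriv u 0)^2 := by positivity
        exact mul_pos h2 (Real.exp_pos _)
      nlinarith [Real.exp_pos (K * x0)]
    · rw [← h]; exact h0
  -- q = exp(-μx²) * (μ u' + γ u)
  have hq : ∀ x : ℝ, HasDerivAt
      (fun y => Real.exp (-(μ * y^2)) * (μ * deriv u y + γ * u y))
      (Real.exp (-(μ*x^2)) * (μ * deriv (deriv u) x + γ * deriv u x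
        - 2*μ*x*(μ*deriv u x + γ*u x))) x := by
    intro x
    exact ((hE x).mul (((hd2 x).hasDerivAt.const_mul μ).add
      ((hd1 x).hasDerivAt.const_mul γ))).congr_deriv (by simp only [Pi.add_apply]; ring)
  have hqd : ∀ x ≥ (0:ℝ),
      deriv (fun y => Real.exp (-(μ * y^2)) * (μ * deriv u y + γ * u y)) x
      = Real.exp (-(μ*x^2)) * (γ * deriv u x) := by
    intro x hx
    rw [(hq x).deriv, hode' x hx]
    ring
  have hqdiff : Differentiable ℝ
      (fun y => Real.exp (-(μ * y^2)) * (μ * deriv u y + γ * u y)) :=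
    fun x => (hq x).differentiableAt
  have qanti : AntitoneOn
      (fun y => Real.exp (-(μ * y^2)) * (μ * deriv u y + γ * u y)) (Ici 0) := by
    apply antitoneOn_of_deriv_nonpos (convex_Ici 0) hqdiff.continuous.continuousOn
      hqdiff.differentiableOn
    intro x hx
    rw [interior_Ici] at hx
    rw [hqd x hx.le]
    have h1 := hds x hx.le
    have h2 := (Real.exp_pos (-(μ*x^2))).le
    exact mul_nonpos_of_nonneg_of_nonpos h2 (mul_nonpos_of_nonneg_of_nonpos hγ.le h1)
  -- STEP 4a : μu' + γu ≥ 0 on [0,∞)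
  have hw : ∀ x ≥ (0:ℝ), 0 ≤ μ * deriv u x + γ * u x := by
    by_contra hcon
    push_neg at hcon
    obtain ⟨x1, hx1, hw1⟩ := hcon
    have key : ∀ x ≥ x1, μ * deriv u x + γ * u x ≤ μ * deriv u x1 + γ * u x1 := by
      intro x hx
      have h1 : Real.exp (-(μ*x^2)) * (μ * deriv u x + γ * u x)
          ≤ Real.exp (-(μ*x1^2)) * (μ * deriv u x1 + γ * u x1) :=
        qanti hx1 (hx1.trans hx) hx
      have e1 : Real.exp (-(μ*x^2)) ≤ Real.exp (-(μ*x1^2)) := hEmono x1 x hx1 hx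
      have ha : 0 < Real.exp (-(μ*x1^2)) := Real.exp_pos _
      have hb : 0 < Real.exp (-(μ*x^2)) := Real.exp_pos _
      have hwx : μ * deriv u x + γ * u x < 0 := by
        by_contra hcc
        push_neg at hcc
        nlinarith [mul_nonneg hb.le hcc,
          mul_neg_of_pos_of_neg ha hw1]
      have h2 : Real.exp (-(μ*x1^2)) * (μ * deriv u x1 + γ * u x1)
          ≤ Real.exp (-(μ*x^2)) * (μ * deriv u x1 + γ * u x1) :=
        mul_le_mul_of_nonpos_right e1 hw1.le
      exact le_of_mul_le_mul_left (h1.trans h2) hb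
    set c0 := (μ * deriv u x1 + γ * u x1) / μ with hc0def
    have hc0neg : c0 < 0 := div_neg_of_neg_of_pos hw1 hμ
    have hlow : ∀ x ≥ x1, deriv u x ≤ c0 := by
      intro x hx
      have h1 := key x hx
      have h2 := hnn x (hx1.trans hx)
      rw [hc0def, le_div_iff₀ hμ]
      nlinarith
    have hder : ∀ x : ℝ, HasDerivAt (fun x => u x - c0 * x) (deriv u x - c0) x :=
      fun x =>
        ((hd1 x).hasDerivAt.sub ((hasDerivAt_id x).const_mul c0)).congr_deriv (by ring)
    have hgdiff : Differentiable ℝ (fun x => u x - c0 * x) :=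
      fun x => (hder x).differentiableAt
    have hg : AntitoneOn (fun x => u x - c0 * x) (Ici x1) := by
      apply antitoneOn_of_deriv_nonpos (convex_Ici x1)
        hgdiff.continuous.continuousOn hgdiff.differentiableOn
      intro x hx
      rw [interior_Ici] at hx
      rw [(hder x).deriv]
      linarith [hlow x hx.le]
    set X := x1 + (u x1 + 1) / (-c0) with hXdef
    have hu1pos : 0 < u x1 + 1 := by linarith [hnn x1 hx1]
    have hXx1 : x1 ≤ X := by
      have : 0 < (u x1 + 1) / (-c0) := div_pos hu1pos (neg_pos.mpr hc0neg)
      rw [hXdef]; linarith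
    have hgX : u X - c0 * X ≤ u x1 - c0 * x1 :=
      hg self_mem_Ici hXx1 hXx1
    have hc0ne : c0 ≠ 0 := ne_of_lt hc0neg
    have hcalc : c0 * (X - x1) = -(u x1 + 1) := by
      rw [hXdef, add_sub_cancel_left, div_neg, mul_neg, mul_div_assoc',
        mul_div_cancel_left₀ _ hc0ne]
    have : u X ≤ -1 := by nlinarith
    linarith [hnn X (hx1.trans hXx1)]
  -- STEP 4b : μu' + γu > 0 on (0,∞)
  have hwpos : ∀ x > (0:ℝ), 0 < μ * deriv u x + γ * u x := by
    intro x1 hx1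
    rcases lt_or_eq_of_le (hw x1 hx1.le) with h | h
    · exact h
    · exfalso
      have hq0 : ∀ x ≥ x1, Real.exp (-(μ * x^2)) * (μ * deriv u x + γ * u x) = 0 := by
        intro x hx
        have h1 : Real.exp (-(μ*x^2)) * (μ * deriv u x + γ * u x)
            ≤ Real.exp (-(μ*x1^2)) * (μ * deriv u x1 + γ * u x1) :=
          qanti hx1.le (hx1.le.trans hx) hx
        rw [← h, mul_zero] at h1
        have h2 : 0 ≤ Real.exp (-(μ*x^2)) * (μ * deriv u x + γ * u x) :=
          mul_nonneg (Real.exp_pos _).le (hw x (hx1.le.trans hx))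
        linarith
      set x2 := x1 + 1 with hx2def
      have hx2pos : 0 < x2 := by rw [hx2def]; linarith
      have hEq : (fun y => Real.exp (-(μ * y^2)) * (μ * deriv u y + γ * u y))
          =ᶠ[nhds x2] (fun _ => (0:ℝ)) := by
        filter_upwards [Ioi_mem_nhds (show x1 < x2 by rw [hx2def]; linarith)] with y hy
        exact hq0 y hy.le
      have hdq : deriv (fun y => Real.exp (-(μ * y^2)) * (μ * deriv u y + γ * u y)) x2
          = 0 := by
        rw [hEq.deriv_eq]
        simp
      rw [hqd x2 hx2pos.le] at hdq
      have hd20 : deriv u x2 = 0 := by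
        have he := Real.exp_ne_zero (-(μ*x2^2))
        rcases mul_eq_zero.mp hdq with h' | h'
        · exact absurd h' he
        · rcases mul_eq_zero.mp h' with h'' | h''
          · exact absurd h'' (ne_of_gt hγ)
          · exact h''
      have hw2 : μ * deriv u x2 + γ * u x2 = 0 := by
        have := hq0 x2 (by rw [hx2def]; linarith)
        rcases mul_eq_zero.mp this with h' | h'
        · exact absurd h' (Real.exp_ne_zero _)
        · exact h'
      rw [hd20] at hw2
      have : u x2 = 0 := by
        have h9 : γ * u x2 = 0 := by linarith
        rcases mul_eq_zero.mp h9 with h' | h'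
        · exact absurd h' hγ.ne'
        · exact h'
      linarith [hupos x2 hx2pos.le]
  -- Second bullet : u'' > 0 on (0,∞)
  have h2nd : ∀ x > (0:ℝ), 0 < deriv (deriv u) x := by
    intro x hx
    rw [hode' x hx.le]
    nlinarith [mul_pos hx (hwpos x hx)]
  -- Third bullet : u' < 0 on (0,∞)
  have hneg3 : ∀ x > (0:ℝ), deriv u x < 0 := by
    intro x1 hx1
    rcases lt_or_eq_of_le (hds x1 hx1.le) with h | h
    · exact h
    · exfalso
      have hp0 : ∀ x ≥ x1, Real.exp (-(μ * x^2)) * deriv u x = 0 := by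
        intro x hx
        have h1 : Real.exp (-(μ*x1^2)) * deriv u x1
            ≤ Real.exp (-(μ*x^2)) * deriv u x :=
          pmono hx1.le (hx1.le.trans hx) hx
        rw [h, mul_zero] at h1
        have h2 : Real.exp (-(μ*x^2)) * deriv u x ≤ 0 :=
          mul_nonpos_of_nonneg_of_nonpos (Real.exp_pos _).le (hds x (hx1.le.trans hx))
        linarith
      set x2 := x1 + 1 with hx2def
      have hx2pos : 0 < x2 := by rw [hx2def]; linarith
      have hEq : (fun y => Real.exp (-(μ * y^2)) * deriv u y)
          =ᶠ[nhds x2] (fun _ => (0:ℝ)) := by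
        filter_upwards [Ioi_mem_nhds (show x1 < x2 by rw [hx2def]; linarith)] with y hy
        exact hp0 y hy.le
      have hdq : deriv (fun y => Real.exp (-(μ * y^2)) * deriv u y) x2 = 0 := by
        rw [hEq.deriv_eq]
        simp
      rw [hpd x2 hx2pos.le] at hdq
      have hu2 : u x2 = 0 := by
        have he := Real.exp_ne_zero (-(μ*x2^2))
        rcases mul_eq_zero.mp hdq with h' | h'
        · exact absurd h' he
        · nlinarith [hupos x2 hx2pos.le, mul_pos (mul_pos two_pos hγ) hx2pos]
      linarith [hupos x2 hx2pos.le]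
  -- Assemble
  refine ⟨hupos, h2nd, hneg3, ?_⟩
  apply strictAntiOn_of_deriv_neg (convex_Ici 0) hd1.continuous.continuousOn
  intro x hx
  rw [interior_Ici] at hx
  exact hneg3 x hx
end

section
/- Let μ, γ > 0 and let Φ, Ψ : [0,∞) → ℝ be twice continuously differentiable with (1/2)·Φ''(x) = (γx − μ)·Φ(x) − μx·Φ'(x) and (1/2)·Ψ''(x) = (γx − μ)·Ψ(x) − μx·Ψ'(x) for all x ≥ 0. Set φ(x) := e^{μx²}Φ(x) and ψ(x) := e^{μx²}Ψ(x), and assume: (a) φ(x)Ψ'(x) − ψ(x)Φ'(x) = 1 for all x ≥ 0; (b) Ψ'(0) = 0; (c) Φ(y) → 0, y·Φ(y) → 0 and y·Φ'(y) → 0 as y → ∞; (d) the functions y ↦ Φ(y) and y ↦ y²·Φ(y) are Lebesgue integrable on [0,∞). Then for every x ≥ 0: φ(x)·∫₀ˣ 2γy²·Ψ(y) dy + ψ(x)·∫ₓ^∞ 2γy²·Φ(y) dy = x − μ/γ + φ(x)·Ψ(0). -/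
open Real Filter Set MeasureTheory

noncomputable def Fof (μ γ : ℝ) (w : ℝ → ℝ) (y : ℝ) : ℝ :=
  y * deriv w y - w y + 2*μ*y^2* w y - μ/γ*(deriv w y + 2*μ*y* w y)

lemma Fof_hasDerivAt (μ γ : ℝ) (hγ : γ ≠ 0) (w : ℝ → ℝ) (hw : ContDiff ℝ 2 w)
    (y : ℝ) (hode : (1/2) * deriv (deriv w) y = (γ * y - μ) * w y - μ * y * deriv w y) :
    HasDerivAt (Fof μ γ w) (2*γ*y^2* w y) y := by
  have hw1 : Differentiable ℝ w := hw.differentiable (by norm_num)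
  have hw2 : Differentiable ℝ (deriv w) :=
    ((contDiff_succ_iff_deriv.mp (show ContDiff ℝ (1+1) w by norm_num [hw])).2.2).differentiable
      (by norm_num)
  have hdw : HasDerivAt w (deriv w y) y := (hw1 y).hasDerivAt
  have hdw2 : HasDerivAt (deriv w) (deriv (deriv w) y) y := (hw2 y).hasDerivAt
  have H := ((((hasDerivAt_id y).mul hdw2).sub hdw).add
      (((hasDerivAt_pow 2 y).mul hdw).const_mul (2*μ))).sub
      ((hdw2.add (((hasDerivAt_id y).mul hdw).const_mul (2*μ))).const_mul (μ/γ))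
  have heq : Fof μ γ w = (fun x => id x * deriv w x - w x + 2*μ * (x ^ 2 * w x)
      - μ/γ * (deriv w x + 2*μ * (id x * w x))) := by
    funext x; simp only [Fof, id_eq]; ring
  rw [heq]
  refine H.congr_deriv ?_
  have hd2 : deriv (deriv w) y = 2*((γ * y - μ) * w y - μ * y * deriv w y) := by linarith
  rw [hd2, id_eq]
  field_simp
  ring

lemma limit_zero_of_integrableOn {f : ℝ → ℝ} (hf : IntegrableOn f (Ici (0:ℝ))) {c : ℝ}
    (h : Tendsto f atTop (nhds c)) : c = 0 := by
  by_contra hc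
  have hpos : 0 < |c| / 2 := by positivity
  have hev : ∀ᶠ y in atTop, |c| / 2 ≤ |f y| :=
    (h.abs).eventually (eventually_ge_nhds (by linarith [abs_pos.mpr hc] : |c|/2 < |c|))
  obtain ⟨M, hM⟩ := eventually_atTop.mp hev
  set M' := max M 0 with hM'
  have hf' : IntegrableOn f (Ici M') := hf.mono_set (Ici_subset_Ici.mpr (le_max_right _ _))
  have hconst : Integrable (fun _ : ℝ => |c|/2) (volume.restrict (Ici M')) := by
    refine Integrable.mono' hf'.abs aestronglyMeasurable_const ?_
    refine (ae_restrict_iff' measurableSet_Ici).mpr (Filter.Eventually.of_forall fun y hy => ?_)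
    rw [Real.norm_eq_abs, abs_of_nonneg hpos.le]
    exact hM y ((le_max_left _ _).trans hy)
  rcases (integrable_const_iff.mp hconst) with h0 | hlt
  · exact absurd h0 (by positivity)
  · rw [isFiniteMeasure_restrict, Real.volume_Ici] at hlt
    exact absurd hlt (by simp)

/-- Integration-by-parts identity for the expected killing position of the
reflecting Ornstein-Uhlenbeck process with drift `−μx` killed at rate `γx`.  Here `Φ, Ψ`
solve `(1/2)w'' = (γx−μ)w − μxw'` on `[0,∞)`, `φ = e^{μx²}Φ`, `ψ = e^{μx²}Ψ`, the
Wronskian identity (a) holds, `Ψ'(0) = 0` (b), `Φ` decays suitably (c) and `Φ`, `y²Φ` are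
integrable (d).  Then `φ(x)∫₀ˣ 2γy²Ψ + ψ(x)∫ₓ^∞ 2γy²Φ = x − μ/γ + φ(x)Ψ(0)`. -/
theorem OU_expected_killing_position_identity (μ γ : ℝ) (hμ : 0 < μ) (hγ : 0 < γ)
    (Φ Ψ : ℝ → ℝ) (hΦ : ContDiff ℝ 2 Φ) (hΨ : ContDiff ℝ 2 Ψ)
    (hΦ_ode : ∀ x ≥ (0:ℝ),
      (1/2) * deriv (deriv Φ) x = (γ * x - μ) * Φ x - μ * x * deriv Φ x)
    (hΨ_ode : ∀ x ≥ (0:ℝ),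
      (1/2) * deriv (deriv Ψ) x = (γ * x - μ) * Ψ x - μ * x * deriv Ψ x)
    (φ ψ : ℝ → ℝ)
    (hφ : ∀ x, φ x = Real.exp (μ * x ^ 2) * Φ x)
    (hψ : ∀ x, ψ x = Real.exp (μ * x ^ 2) * Ψ x)
    (hwr : ∀ x ≥ (0:ℝ), φ x * deriv Ψ x - ψ x * deriv Φ x = 1)
    (hΨ'0 : deriv Ψ 0 = 0)
    (hΦ_lim : Tendsto Φ atTop (nhds 0))
    (hΦ_lim' : Tendsto (fun y => y * Φ y) atTop (nhds 0))
    (hΦ'_lim : Tendsto (fun y => y * deriv Φ y) atTop (nhds 0))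
    (hΦ_int : IntegrableOn Φ (Set.Ici 0))
    (hΦ_int2 : IntegrableOn (fun y => y ^ 2 * Φ y) (Set.Ici 0)) :
    ∀ x ≥ (0:ℝ),
      φ x * (∫ y in (0:ℝ)..x, 2 * γ * y ^ 2 * Ψ y)
        + ψ x * (∫ y in Set.Ioi x, 2 * γ * y ^ 2 * Φ y)
      = x - μ / γ + φ x * Ψ 0 := by
  intro x hx
  have hΨc : Continuous Ψ := hΨ.continuous
  -- FTC on [0, x] for Ψ
  have eqA : ∫ y in (0:ℝ)..x, 2 * γ * y ^ 2 * Ψ y = Fof μ γ Ψ x - Fof μ γ Ψ 0 := by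
    refine intervalIntegral.integral_eq_sub_of_hasDerivAt (fun y hy => ?_)
      (Continuous.intervalIntegrable (by fun_prop) _ _)
    refine Fof_hasDerivAt μ γ hγ.ne' Ψ hΨ y (hΨ_ode y ?_)
    rw [uIcc_of_le hx] at hy; exact hy.1
  have FΨ0 : Fof μ γ Ψ 0 = -Ψ 0 := by simp [Fof, hΨ'0]
  -- integrability of the Φ integrand on Ioi t for t ≥ 0
  have hintΦ : ∀ t ≥ (0:ℝ), IntegrableOn (fun y => 2 * γ * y ^ 2 * Φ y) (Ioi t) := by
    intro t ht
    have h0 : IntegrableOn (fun y => 2 * γ * (y ^ 2 * Φ y)) (Ici 0) :=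
      hΦ_int2.const_mul (2*γ)
    have h1 : IntegrableOn (fun y => 2 * γ * (y ^ 2 * Φ y)) (Ioi t) :=
      h0.mono_set fun y hy => le_of_lt (lt_of_le_of_lt ht hy)
    exact h1.congr_fun (fun y _ => by ring) measurableSet_Ioi
  have hderΦ : ∀ y ∈ Ici (0:ℝ), HasDerivAt (Fof μ γ Φ) (2*γ*y^2* Φ y) y :=
    fun y hy => Fof_hasDerivAt μ γ hγ.ne' Φ hΦ y (hΦ_ode y hy)
  -- FTC on [0, R] for Φ
  have ftcΦ : ∀ R ≥ (0:ℝ), ∫ y in (0:ℝ)..R, 2 * γ * y ^ 2 * Φ y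
      = Fof μ γ Φ R - Fof μ γ Φ 0 := by
    intro R hR
    refine intervalIntegral.integral_eq_sub_of_hasDerivAt (fun y hy => ?_)
      (Continuous.intervalIntegrable (by have := hΦ.continuous; fun_prop) _ _)
    rw [uIcc_of_le hR] at hy
    exact hderΦ y hy.1
  -- Fof Φ has a limit L at infinity
  set L : ℝ := Fof μ γ Φ 0 + ∫ y in Ioi (0:ℝ), 2 * γ * y ^ 2 * Φ y with hL
  have hFtend : Tendsto (Fof μ γ Φ) atTop (nhds L) := by
    have hI : Tendsto (fun R => ∫ y in (0:ℝ)..R, 2 * γ * y ^ 2 * Φ y) atTop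
        (nhds (∫ y in Ioi (0:ℝ), 2 * γ * y ^ 2 * Φ y)) :=
      intervalIntegral_tendsto_integral_Ioi 0 (hintΦ 0 le_rfl) tendsto_id
    refine Tendsto.congr' ?_ (tendsto_const_nhds.add hI)
    filter_upwards [eventually_ge_atTop (0:ℝ)] with R hR
    rw [ftcΦ R hR]; ring
  -- deriv Φ tends to 0
  have hΦ'0 : Tendsto (deriv Φ) atTop (nhds 0) := by
    have h1 : Tendsto (fun y => y * deriv Φ y * y⁻¹) atTop (nhds (0 * 0)) :=
      hΦ'_lim.mul tendsto_inv_atTop_zero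
    rw [mul_zero] at h1
    refine Tendsto.congr' ?_ h1
    filter_upwards [eventually_ge_atTop (1:ℝ)] with y hy
    have : y ≠ 0 := by linarith
    field_simp
  -- y² Φ y tends to L / (2μ)
  have hy2 : Tendsto (fun y => y ^ 2 * Φ y) atTop (nhds (L / (2*μ))) := by
    have hcomb : Tendsto (fun y => (Fof μ γ Φ y - y * deriv Φ y + Φ y
        + μ/γ * (deriv Φ y + 2*μ*(y * Φ y))) / (2*μ)) atTop
        (nhds ((L - 0 + 0 + μ/γ * (0 + 2*μ*0)) / (2*μ))) :=
      (((hFtend.sub hΦ'_lim).add hΦ_lim).add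
        ((hΦ'0.add (hΦ_lim'.const_mul (2*μ))).const_mul (μ/γ))).div_const _
    have hval : (L - 0 + 0 + μ/γ * (0 + 2*μ*0)) / (2*μ) = L / (2*μ) := by ring
    rw [hval] at hcomb
    refine Tendsto.congr (fun y => ?_) hcomb
    simp only [Fof]
    field_simp
    ring
  have hc0 : L / (2*μ) = 0 := limit_zero_of_integrableOn hΦ_int2 hy2
  have hL0 : L = 0 := by
    rcases div_eq_zero_iff.mp hc0 with h | h
    · exact h
    · exact absurd h (by positivity)
  have hF0 : Tendsto (Fof μ γ Φ) atTop (nhds 0) := hL0 ▸ hFtend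
  -- improper FTC on (x, ∞)
  have eqB : ∫ y in Ioi x, 2 * γ * y ^ 2 * Φ y = 0 - Fof μ γ Φ x := by
    refine integral_Ioi_of_hasDerivAt_of_tendsto'
      (fun y hy => hderΦ y (le_trans hx hy)) (hintΦ x hx) hF0
  -- assemble
  have e1 : φ x * Ψ x = ψ x * Φ x := by rw [hφ, hψ]; ring
  have e2 := hwr x hx
  rw [eqA, eqB, FΨ0]
  simp only [Fof]
  linear_combination (x - μ/γ) * e2 + (-1 + 2*μ*x^2 - 2*μ^2*x/γ) * e1
end

section
/- Let μ, γ > 0 and suppose f, g : [0,∞) → ℝ are twice continuously differentiable, satisfy (1/2)·w''(x) + μx·w'(x) − γx·w(x) = 0 for all x ≥ 0, and are positive and non-increasing on [0,∞). Then there exists a constant c > 0 with g(x) = c·f(x) for all x ≥ 0. -/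
open Real Filter Set Topology

lemma OU_diff_facts {f : ℝ → ℝ} (hf : ContDiff ℝ 2 f) :
    Differentiable ℝ f ∧ Differentiable ℝ (deriv f) := by
  rw [show (2 : WithTop ℕ∞) = 1 + 1 from rfl] at hf
  have h := contDiff_succ_iff_deriv.mp hf
  exact ⟨h.1, h.2.2.differentiable one_ne_zero⟩

lemma OU_deriv_nonpos {f : ℝ → ℝ} (hfd : Differentiable ℝ f)
    (hf_anti : AntitoneOn f (Set.Ici 0)) : ∀ x > (0:ℝ), deriv f x ≤ 0 := by
  intro x hx
  have hslope : Tendsto (slope f x) (𝓝[>] x) (𝓝 (deriv f x)) :=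
    ((hasDerivAt_iff_tendsto_slope.mp (hfd x).hasDerivAt).mono_left
      (nhdsWithin_mono x fun y hy => ne_of_gt hy))
  refine le_of_tendsto hslope ?_
  filter_upwards [self_mem_nhdsWithin] with y (hy : x < y)
  have hfy : f y ≤ f x := hf_anti (mem_Ici.mpr hx.le) (mem_Ici.mpr (hx.le.trans hy.le)) hy.le
  rw [slope_def_field]
  apply div_nonpos_of_nonpos_of_nonneg <;> linarith

-- derivative of x ↦ exp(μ x²)
lemma OU_exp_deriv (μ : ℝ) (t : ℝ) :
    HasDerivAt (fun s : ℝ => Real.exp (μ * s ^ 2)) (Real.exp (μ * t ^ 2) * (μ * (2 * t))) t := by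
  have hq : HasDerivAt (fun s : ℝ => μ * s ^ 2) (μ * (2 * t)) t := by
    simpa [mul_comm] using (hasDerivAt_pow 2 t).const_mul μ
  exact hq.exp

/-- Core: if the Wronskian `f g' - g f'` equals `W0 e^{-μx²}` on `[0,∞)` and
everything is positive/decreasing, then `W0` cannot be positive. -/
lemma OU_key (μ γ : ℝ) (hμ : 0 < μ) (hγ : 0 < γ) (f g : ℝ → ℝ)
    (hfd : Differentiable ℝ f) (hfd2 : Differentiable ℝ (deriv f))
    (hf_ode2 : ∀ x ≥ (0:ℝ), deriv (deriv f) x = 2*γ*x*f x - 2*μ*x*deriv f x)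
    (hf_pos : ∀ x ≥ (0:ℝ), 0 < f x) (hg_pos : ∀ x ≥ (0:ℝ), 0 < g x)
    (hg_le : ∀ x ≥ (0:ℝ), g x ≤ g 0)
    (hf' : ∀ x > (0:ℝ), deriv f x ≤ 0) (hg' : ∀ x > (0:ℝ), deriv g x ≤ 0)
    (W0 : ℝ)
    (hW : ∀ x ≥ (0:ℝ), f x * deriv g x - g x * deriv f x = W0 * Real.exp (-(μ*x^2))) :
    ¬ 0 < W0 := by
  intro hW0
  have hg0 : 0 < g 0 := hg_pos 0 le_rfl
  set C : ℝ := W0 / g 0 with hCdef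
  clear_value C
  have hCpos : 0 < C := by rw [hCdef]; exact div_pos hW0 hg0
  have hCg : C * g 0 = W0 := by rw [hCdef]; exact div_mul_cancel₀ _ (ne_of_gt hg0)
  -- Step 1 : -f' ≥ C e^{-μ t²}
  have step1 : ∀ t > (0:ℝ), C * Real.exp (-(μ*t^2)) ≤ -deriv f t := by
    intro t ht
    have h := hW t ht.le
    have hft := hf_pos t ht.le
    have hgt := hg_pos t ht.le
    have hgle := hg_le t ht.le
    have hg't := hg' t ht
    have hE := Real.exp_pos (-(μ*t^2))
    have h1 : W0 * Real.exp (-(μ*t^2)) ≤ g t * (-deriv f t) := by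
      nlinarith [mul_nonpos_of_nonneg_of_nonpos hft.le hg't]
    have h2 : 0 ≤ -deriv f t := by nlinarith
    nlinarith [mul_le_mul_of_nonneg_right hgle h2]
  -- Step 2 : lower bound for f
  set K : ℝ := C * Real.exp (-(3*μ)) with hKdef
  clear_value K
  have hKpos : 0 < K := by rw [hKdef]; exact mul_pos hCpos (Real.exp_pos _)
  have step2 : ∀ x ≥ (1:ℝ), K * Real.exp (-(μ*x^2)) / x ≤ f x := by
    intro x hx1
    have hx0 : 0 < x := lt_of_lt_of_le one_pos hx1
    set b : ℝ := x + 1/x with hbdef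
    clear_value b
    have hxb : x < b := by rw [hbdef]; exact lt_add_of_pos_right x (by positivity)
    obtain ⟨ξ, hξ, hslope⟩ := exists_deriv_eq_slope f hxb
      (hfd.continuous.continuousOn) (hfd.differentiableOn)
    have hξpos : 0 < ξ := hx0.trans hξ.1
    have h1 := step1 ξ hξpos
    have hbx : b - x = 1/x := by rw [hbdef]; ring
    have hslope' : deriv f ξ = (f b - f x) * x := by
      rw [hbx] at hslope
      rw [hslope]; field_simp
    have hfbpos : 0 < f b := hf_pos b (by rw [hbdef]; positivity)
    have hξ2 : ξ^2 ≤ x^2 + 3 := by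
      have h1x : 1/x ≤ 1 := by rw [div_le_one hx0]; exact hx1
      have h0x : (0:ℝ) ≤ 1/x := by positivity
      have hxx : x * (1/x) = 1 := by field_simp
      have hb2 : b^2 ≤ x^2 + 3 := by
        have hbe : b^2 = x^2 + 2*(x*(1/x)) + (1/x)^2 := by rw [hbdef]; ring
        rw [hxx] at hbe
        have hsq : (1/x)^2 ≤ 1 := by
          nlinarith [mul_nonneg (sub_nonneg.mpr h1x) (by linarith : (0:ℝ) ≤ 1 + 1/x)]
        linarith [hbe, hsq]
      nlinarith [hξ.2, hξpos.le, hxb.le]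
    have hexp : Real.exp (-(μ*x^2)) * Real.exp (-(3*μ)) ≤ Real.exp (-(μ*ξ^2)) := by
      rw [← Real.exp_add]
      apply Real.exp_le_exp.mpr
      nlinarith
    rw [div_le_iff₀ hx0]
    -- f x * x ≥ (f x - f b) * x = -deriv f ξ ≥ C e^{-μξ²} ≥ C e^{-3μ} e^{-μx²} = K e^{-μx²}
    have hms : -deriv f ξ = (f x - f b) * x := by rw [hslope']; ring
    have h3 : C * Real.exp (-(μ*ξ^2)) ≤ (f x - f b) * x := by linarith
    have h4 : K * Real.exp (-(μ*x^2)) ≤ C * Real.exp (-(μ*ξ^2)) := by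
      have hmm := mul_le_mul_of_nonneg_left hexp hCpos.le
      have heq : K * Real.exp (-(μ*x^2)) = C * (Real.exp (-(μ*x^2)) * Real.exp (-(3*μ))) := by
        rw [hKdef]; ring
      rw [heq]; exact hmm
    nlinarith [mul_pos hfbpos hx0]
  -- Step 3 : the rescaled derivative A(t) = e^{μt²} f'(t)
  set A : ℝ → ℝ := fun t => Real.exp (μ*t^2) * deriv f t with hAdef
  have hA : ∀ t ≥ (0:ℝ), HasDerivAt A (Real.exp (μ*t^2) * (2*γ*t*f t)) t := by
    intro t ht
    have h := (OU_exp_deriv μ t).mul (hfd2 t).hasDerivAt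
    refine h.congr_deriv ?_
    rw [hf_ode2 t ht]; ring
  have contA : Continuous A := by
    have h1 : Continuous fun t : ℝ => μ * t ^ 2 := by fun_prop
    exact (Real.continuous_exp.comp h1).mul hfd2.continuous
  -- Step 4 : contradiction
  set x₀ : ℝ := 1 + (|A 1| + 1)/(2*γ*K) with hx₀def
  clear_value x₀
  have h10 : (1:ℝ) < x₀ := by
    rw [hx₀def]
    have : 0 < (|A 1| + 1)/(2*γ*K) := by positivity
    linarith
  obtain ⟨ξ, hξ, hsl⟩ := exists_hasDerivAt_eq_slope A (fun t => Real.exp (μ*t^2) * (2*γ*t*f t))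
    h10 contA.continuousOn (fun t ht => hA t (by linarith [ht.1]))
  have hξ1 : (1:ℝ) ≤ ξ := hξ.1.le
  have hξpos : 0 < ξ := lt_of_lt_of_le one_pos hξ1
  have hlow : 2*γ*K ≤ Real.exp (μ*ξ^2) * (2*γ*ξ*f ξ) := by
    have h2 := step2 ξ hξ1
    have he : Real.exp (μ*ξ^2) * Real.exp (-(μ*ξ^2)) = 1 := by
      rw [← Real.exp_add]; simp
    have e1 : Real.exp (μ*ξ^2) * (2*γ*ξ*(K * Real.exp (-(μ*ξ^2)) / ξ)) = 2*γ*K := by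
      have hne : ξ ≠ 0 := ne_of_gt hξpos
      field_simp
      linear_combination he
    rw [← e1]
    gcongr
  rw [hsl] at hlow
  have hx01 : 0 < x₀ - 1 := by linarith
  have hAx₀ : A 1 + (|A 1| + 1) ≤ A x₀ := by
    rw [le_div_iff₀ hx01] at hlow
    have : 2*γ*K*(x₀-1) = |A 1| + 1 := by
      rw [hx₀def]; field_simp; ring
    linarith
  have hA1 : (1:ℝ) ≤ A x₀ := by
    have := neg_abs_le (A 1); linarith
  have hAneg : A x₀ ≤ 0 :=
    mul_nonpos_of_nonneg_of_nonpos (Real.exp_pos _).le (hf' x₀ (by linarith))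
  linarith

/-- Up to a positive constant factor there is at most one positive
non-increasing solution of `(1/2)w'' + μxw' − γxw = 0` on `[0,∞)`: if `f` and `g`
are two such solutions then `g = c·f` on `[0,∞)` for some `c > 0`. -/
theorem OU_positive_decreasing_solution_unique (μ γ : ℝ) (hμ : 0 < μ) (hγ : 0 < γ)
    (f g : ℝ → ℝ) (hf : ContDiff ℝ 2 f) (hg : ContDiff ℝ 2 g)
    (hf_ode : ∀ x ≥ (0:ℝ),
      (1/2) * deriv (deriv f) x + μ * x * deriv f x - γ * x * f x = 0)
    (hg_ode : ∀ x ≥ (0:ℝ),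
      (1/2) * deriv (deriv g) x + μ * x * deriv g x - γ * x * g x = 0)
    (hf_pos : ∀ x ≥ (0:ℝ), 0 < f x) (hg_pos : ∀ x ≥ (0:ℝ), 0 < g x)
    (hf_anti : AntitoneOn f (Set.Ici 0)) (hg_anti : AntitoneOn g (Set.Ici 0)) :
    ∃ c > (0:ℝ), ∀ x ≥ (0:ℝ), g x = c * f x := by
  obtain ⟨hfd, hfd2⟩ := OU_diff_facts hf
  obtain ⟨hgd, hgd2⟩ := OU_diff_facts hg
  have hf_ode2 : ∀ x ≥ (0:ℝ), deriv (deriv f) x = 2*γ*x*f x - 2*μ*x*deriv f x := by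
    intro x hx; have := hf_ode x hx; linarith
  have hg_ode2 : ∀ x ≥ (0:ℝ), deriv (deriv g) x = 2*γ*x*g x - 2*μ*x*deriv g x := by
    intro x hx; have := hg_ode x hx; linarith
  have hf' := OU_deriv_nonpos hfd hf_anti
  have hg' := OU_deriv_nonpos hgd hg_anti
  have hf_le : ∀ x ≥ (0:ℝ), f x ≤ f 0 := fun x hx =>
    hf_anti (mem_Ici.mpr le_rfl) (mem_Ici.mpr hx) hx
  have hg_le : ∀ x ≥ (0:ℝ), g x ≤ g 0 := fun x hx =>
    hg_anti (mem_Ici.mpr le_rfl) (mem_Ici.mpr hx) hx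
  -- The Wronskian
  set W : ℝ → ℝ := fun x => f x * deriv g x - g x * deriv f x with hWdef
  set W0 : ℝ := W 0 with hW0def
  -- derivative of the Wronskian
  have hW' : ∀ x ≥ (0:ℝ), HasDerivAt W (-(2*μ*x) * W x) x := by
    intro x hx
    have h1 := ((hfd x).hasDerivAt.mul (hgd2 x).hasDerivAt).sub
      ((hgd x).hasDerivAt.mul (hfd2 x).hasDerivAt)
    refine h1.congr_deriv ?_
    rw [hf_ode2 x hx, hg_ode2 x hx]
    simp only [hWdef]; ring
  -- V = W·e^{μx²} has zero derivative on [0,∞)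
  set V : ℝ → ℝ := fun x => W x * Real.exp (μ*x^2) with hVdef
  have hV : ∀ x ≥ (0:ℝ), HasDerivAt V 0 x := by
    intro x hx
    have h1 := (hW' x hx).mul (OU_exp_deriv μ x)
    refine h1.congr_deriv ?_
    ring
  have contV : Continuous V := by
    have hWc : Continuous W := (hfd.continuous.mul hgd2.continuous).sub
      (hgd.continuous.mul hfd2.continuous)
    have he : Continuous fun t : ℝ => Real.exp (μ*t^2) := by fun_prop
    exact hWc.mul he
  -- hence W x = W0 · e^{-μx²} on [0,∞)
  have hWid : ∀ x ≥ (0:ℝ), f x * deriv g x - g x * deriv f x = W0 * Real.exp (-(μ*x^2)) := by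
    intro x hx
    have hcon := constant_of_has_deriv_right_zero (f := V) (a := 0) (b := x)
      contV.continuousOn (fun y hy => (hV y hy.1).hasDerivWithinAt) x ⟨hx, le_rfl⟩
    have hV0 : V 0 = W0 := by simp [hVdef, hW0def]
    have hVx : V x = W x * Real.exp (μ*x^2) := rfl
    rw [hVx, hV0] at hcon
    have hE : Real.exp (μ*x^2) > 0 := Real.exp_pos _
    have : W x = W0 * Real.exp (-(μ*x^2)) := by
      rw [Real.exp_neg]
      field_simp
      linarith [hcon]
    simpa [hWdef] using this
  -- the reversed Wronskian identity
  have hWid' : ∀ x ≥ (0:ℝ), g x * deriv f x - f x * deriv g x = (-W0) * Real.exp (-(μ*x^2)) := by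
    intro x hx
    have := hWid x hx
    linear_combination -this
  -- W0 = 0
  have h₁ := OU_key μ γ hμ hγ f g hfd hfd2 hf_ode2 hf_pos hg_pos hg_le hf' hg' W0 hWid
  have h₂ := OU_key μ γ hμ hγ g f hgd hgd2 hg_ode2 hg_pos hf_pos hf_le hg' hf' (-W0) hWid'
  have hW00 : W0 = 0 := by
    push_neg at h₁ h₂
    linarith
  -- the ratio g/f is constant on [0,∞)
  have hr : ∀ x ≥ (0:ℝ), HasDerivAt (fun y => g y / f y) 0 x := by
    intro x hx
    have hfx : f x ≠ 0 := (hf_pos x hx).ne'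
    have h := (hgd x).hasDerivAt.div ((hfd x).hasDerivAt) hfx
    have h0 : f x * deriv g x - g x * deriv f x = 0 := by
      simpa [hW00] using hWid x hx
    refine h.congr_deriv ?_
    rw [div_eq_zero_iff]
    left; linarith
  refine ⟨g 0 / f 0, div_pos (hg_pos 0 le_rfl) (hf_pos 0 le_rfl), ?_⟩
  intro x hx
  have hcont : ContinuousOn (fun y => g y / f y) (Icc 0 x) :=
    ContinuousOn.div (hgd.continuous.continuousOn) (hfd.continuous.continuousOn)
      (fun y hy => (hf_pos y hy.1).ne')
  have hcon := constant_of_has_deriv_right_zero (f := fun y => g y / f y) (a := 0) (b := x)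
    hcont (fun y hy => (hr y hy.1).hasDerivWithinAt) x ⟨hx, le_rfl⟩
  have hf0 : f 0 ≠ 0 := (hf_pos 0 le_rfl).ne'
  have hfx : f x ≠ 0 := (hf_pos x hx).ne'
  field_simp at hcon ⊢
  linarith [hcon]
end

section
/- Let μ, γ > 0 and let h : [0,∞) → ℝ be twice continuously differentiable with (1/2)·h''(x) = −μx·h'(x) + γx·h(x) for all x ≥ 0, h(0) > 0, and h(x) → 0 as x → ∞. Then: (i) h(x) > 0 for all x ≥ 0; (ii) h''(0) = 0; (iii) h is Lebesgue integrable on [0,∞); (iv) h'(x) < 0 and h''(x) > 0 for all x > 0. -/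
set_option maxHeartbeats 1000000

open Real Filter Set MeasureTheory Topology

private lemma monoOn_aux {F DF : ℝ → ℝ} {s : Set ℝ} (hs : Convex ℝ s)
    (hF : ∀ x, HasDerivAt F (DF x) x) (hDF : ∀ x ∈ interior s, 0 ≤ DF x) :
    MonotoneOn F s :=
  monotoneOn_of_deriv_nonneg hs (fun x _ => (hF x).continuousAt.continuousWithinAt)
    (fun x _ => (hF x).differentiableAt.differentiableWithinAt)
    (fun x hx => by rw [(hF x).deriv]; exact hDF x hx)

private lemma antiOn_aux {F DF : ℝ → ℝ} {s : Set ℝ} (hs : Convex ℝ s)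
    (hF : ∀ x, HasDerivAt F (DF x) x) (hDF : ∀ x ∈ interior s, DF x ≤ 0) :
    AntitoneOn F s :=
  antitoneOn_of_deriv_nonpos hs (fun x _ => (hF x).continuousAt.continuousWithinAt)
    (fun x _ => (hF x).differentiableAt.differentiableWithinAt)
    (fun x hx => by rw [(hF x).deriv]; exact hDF x hx)

/-- Any twice continuously differentiable solution of
`(1/2)h'' = −μxh' + γxh` on `[0,∞)` with `h(0) > 0` and `h(x) → 0` at infinity
satisfies: (i) `h > 0` on `[0,∞)`; (ii) `h''(0) = 0`; (iii) `h` is Lebesgue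
integrable on `[0,∞)`; (iv) `h' < 0` and `h'' > 0` on `(0,∞)`. -/
theorem OU_invariant_density_properties (μ γ : ℝ) (hμ : 0 < μ) (hγ : 0 < γ)
    (h : ℝ → ℝ) (hh : ContDiff ℝ 2 h)
    (hode : ∀ x ≥ (0:ℝ),
      (1/2) * deriv (deriv h) x = -(μ * x) * deriv h x + γ * x * h x)
    (h0 : 0 < h 0) (hlim : Tendsto h atTop (nhds 0)) :
    (∀ x ≥ (0:ℝ), 0 < h x) ∧
    deriv (deriv h) 0 = 0 ∧
    IntegrableOn h (Set.Ici 0) ∧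
    (∀ x > (0:ℝ), deriv h x < 0 ∧ 0 < deriv (deriv h) x) := by
  set f1 := deriv h with hf1def
  set f2 := deriv f1 with hf2def
  have hd1 : Differentiable ℝ h := hh.differentiable (by norm_num)
  have hh1 : ContDiff ℝ 1 f1 := by
    have h2 : ContDiff ℝ (1+1 : ℕ) h := by exact_mod_cast hh
    exact (contDiff_succ_iff_deriv.mp (by exact_mod_cast h2)).2.2
  have hd2 : Differentiable ℝ f1 := hh1.differentiable (by norm_num)
  have hc2 : Continuous f2 := hh1.continuous_deriv le_rfl
  have hDh : ∀ x, HasDerivAt h (f1 x) x := fun x => (hd1 x).hasDerivAt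
  have hDf1 : ∀ x, HasDerivAt f1 (f2 x) x := fun x => (hd2 x).hasDerivAt
  have hode2 : ∀ x, 0 ≤ x → f2 x = -(2*μ*x) * f1 x + 2*γ*x * h x := by
    intro x hx; have := hode x hx; linarith
  have hexp : ∀ (c x : ℝ), HasDerivAt (fun y => Real.exp (c * y^2)) (2*c*x * Real.exp (c*x^2)) x := by
    intro c x
    have h1 : HasDerivAt (fun y : ℝ => c * y^2) (c * (2*x^1)) x := (hasDerivAt_pow 2 x).const_mul c
    have h2 := h1.exp
    convert h2 using 1; ring
  have hexpL : ∀ (c x : ℝ), HasDerivAt (fun y => Real.exp (c * y)) (c * Real.exp (c*x)) x := by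
    intro c x
    have h1 : HasDerivAt (fun y : ℝ => c * y) c x := by simpa using (hasDerivAt_id x).const_mul c
    have h2 := h1.exp
    convert h2 using 1; ring
  set g : ℝ → ℝ := fun x => f1 x * Real.exp (μ * x^2) with hgdef
  have hDg : ∀ x, HasDerivAt g ((f2 x + 2*μ*x*f1 x) * Real.exp (μ*x^2)) x := by
    intro x
    have := (hDf1 x).fun_mul (hexp μ x)
    exact this.congr_deriv (by ring)
  -- slope limits
  have hslopeL : ∀ x : ℝ, Tendsto (slope h x) (𝓝[<] x) (𝓝 (f1 x)) := fun x =>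
    (hasDerivAt_iff_tendsto_slope.mp (hDh x)).mono_left
      (nhdsWithin_mono _ fun y hy => mem_compl_singleton_iff.mpr (ne_of_lt hy))
  have hslopeR : ∀ x : ℝ, Tendsto (slope h x) (𝓝[>] x) (𝓝 (f1 x)) := fun x =>
    (hasDerivAt_iff_tendsto_slope.mp (hDh x)).mono_left
      (nhdsWithin_mono _ fun y hy => mem_compl_singleton_iff.mpr (ne_of_gt hy))
  -- MAIN POSITIVITY
  have hpos : ∀ x ≥ (0:ℝ), 0 < h x := by
    by_contra hcon
    push_neg at hcon
    obtain ⟨z, hz0, hzle⟩ := hcon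
    set S : Set ℝ := {x | 0 ≤ x ∧ h x ≤ 0} with hSdef
    have hSne : S.Nonempty := ⟨z, hz0, hzle⟩
    have hSbdd : BddBelow S := ⟨0, fun x hx => hx.1⟩
    have hSclosed : IsClosed S := by
      have hs : S = Ici (0:ℝ) ∩ h ⁻¹' (Iic 0) := by
        ext x; simp [hSdef, mem_Ici, mem_Iic]
      rw [hs]; exact isClosed_Ici.inter (isClosed_Iic.preimage hd1.continuous)
    set x0 := sInf S with hx0def
    have hx0S : x0 ∈ S := hSclosed.csInf_mem hSne hSbdd
    have hx0nn : 0 ≤ x0 := hx0S.1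
    have hx0pos : 0 < x0 := by
      rcases hx0nn.lt_or_eq with h' | h'
      · exact h'
      · exfalso; rw [← h'] at hx0S; exact absurd hx0S.2 (not_le.mpr h0)
    have hposlt : ∀ x, 0 ≤ x → x < x0 → 0 < h x := by
      intro x hx hxlt
      by_contra hc; push_neg at hc
      exact absurd (csInf_le hSbdd ⟨hx, hc⟩) (not_le.mpr hxlt)
    have hx0zero : h x0 = 0 := by
      refine le_antisymm hx0S.2 ?_
      have ht : Tendsto h (𝓝[<] x0) (𝓝 (h x0)) :=
        (hd1.continuous.tendsto x0).mono_left nhdsWithin_le_nhds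
      refine ge_of_tendsto ht ?_
      filter_upwards [Ioo_mem_nhdsLT_of_mem (show x0 ∈ Ioc 0 x0 from ⟨hx0pos, le_rfl⟩)] with x hx
      exact (hposlt x hx.1.le hx.2).le
    have hf1x0 : f1 x0 ≤ 0 := by
      refine le_of_tendsto (hslopeL x0) ?_
      filter_upwards [Ioo_mem_nhdsLT_of_mem (show x0 ∈ Ioc 0 x0 from ⟨hx0pos, le_rfl⟩)] with x hx
      rw [slope_def_field]
      apply div_nonpos_of_nonneg_of_nonpos
      · rw [hx0zero]; linarith [hposlt x hx.1.le hx.2]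
      · linarith [hx.2]
    rcases hf1x0.lt_or_eq with hlt | heq
    · -- Case 1 : f1 x0 < 0
      have hev : ∀ᶠ x in 𝓝[>] x0, h x < 0 := by
        filter_upwards [(hslopeR x0).eventually_lt_const hlt, self_mem_nhdsWithin] with x hx hx'
        have hxx : x0 < x := hx'
        rw [slope_def_field] at hx
        have hb : (0:ℝ) < x - x0 := sub_pos.mpr hxx
        have h2 : (h x - h x0) / (x - x0) * (x - x0) = h x - h x0 := div_mul_cancel₀ _ (ne_of_gt hb)
        nlinarith [mul_neg_of_neg_of_pos hx hb]
      obtain ⟨ε, hε, hball⟩ := Metric.eventually_nhds_iff.mp (eventually_nhdsWithin_iff.mp hev)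
      set x1 := x0 + ε/2 with hx1def
      have hx01 : x0 < x1 := by simp [hx1def]; linarith
      have hint : ∀ x, x0 < x → x ≤ x1 → h x < 0 := by
        intro x hxa hxb
        refine hball ?_ hxa
        rw [Real.dist_eq, abs_of_pos (sub_pos.mpr hxa)]
        simp only [hx1def] at hxb; linarith
      have hnegafter : ∀ x, x0 < x → h x < 0 := by
        by_contra hc; push_neg at hc
        obtain ⟨y, hy1, hy2⟩ := hc
        have hyx1 : x1 ≤ y := by
          by_contra hyc; push_neg at hyc
          exact absurd hy2 (not_le.mpr (hint y hy1 hyc.le))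
        set B : Set ℝ := {x | x1 ≤ x ∧ 0 ≤ h x} with hBdef
        have hBne : B.Nonempty := ⟨y, hyx1, hy2⟩
        have hBbdd : BddBelow B := ⟨x1, fun x hx => hx.1⟩
        have hBclosed : IsClosed B := by
          have hs : B = Ici x1 ∩ h ⁻¹' (Ici 0) := by
            ext x; simp [hBdef, mem_Ici]
          rw [hs]; exact isClosed_Ici.inter (isClosed_Ici.preimage hd1.continuous)
        set x2 := sInf B with hx2def
        have hx2B : x2 ∈ B := hBclosed.csInf_mem hBne hBbdd
        have hx2ge : x1 ≤ x2 := hx2B.1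
        have hnegmid : ∀ x, x0 < x → x < x2 → h x < 0 := by
          intro x ha hb
          rcases le_or_gt x x1 with hc' | hc'
          · exact hint x ha hc'
          · by_contra hc2; push_neg at hc2
            exact absurd (csInf_le hBbdd ⟨hc'.le, hc2⟩) (not_le.mpr hb)
        have hx1lt : x1 < x2 := by
          rcases hx2ge.lt_or_eq with h' | h'
          · exact h'
          · exfalso; rw [← h'] at hx2B
            exact absurd hx2B.2 (not_le.mpr (hint x1 hx01 le_rfl))
        have hx02 : x0 < x2 := lt_trans hx01 hx1lt
        have hx2zero : h x2 = 0 := by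
          refine le_antisymm ?_ hx2B.2
          have ht : Tendsto h (𝓝[<] x2) (𝓝 (h x2)) :=
            (hd1.continuous.tendsto x2).mono_left nhdsWithin_le_nhds
          refine le_of_tendsto ht ?_
          filter_upwards [Ioo_mem_nhdsLT_of_mem (show x2 ∈ Ioc x0 x2 from ⟨hx02, le_rfl⟩)] with x hx
          exact (hnegmid x hx.1 hx.2).le
        have hf1x2 : 0 ≤ f1 x2 := by
          refine ge_of_tendsto (hslopeL x2) ?_
          filter_upwards [Ioo_mem_nhdsLT_of_mem (show x2 ∈ Ioc x0 x2 from ⟨hx02, le_rfl⟩)] with x hx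
          rw [slope_def_field]
          refine div_nonneg_iff.mpr (Or.inr ⟨?_, ?_⟩)
          · rw [hx2zero]; linarith [hnegmid x hx.1 hx.2]
          · linarith [hx.2]
        have hanti : AntitoneOn g (Icc x0 x2) := by
          apply antiOn_aux (convex_Icc _ _) hDg
          intro x hx; rw [interior_Icc] at hx
          have hxpos : 0 < x := lt_trans hx0pos hx.1
          have e := hode2 x hxpos.le
          have he : f2 x + 2*μ*x*f1 x = 2*γ*x*h x := by linarith
          rw [he]
          apply mul_nonpos_of_nonpos_of_nonneg _ (Real.exp_pos _).le
          nlinarith [hnegmid x hx.1 hx.2, mul_pos hγ hxpos]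
        have hgx2 : g x2 ≤ g x0 := hanti ⟨le_rfl, hx02.le⟩ ⟨hx02.le, le_rfl⟩ hx02.le
        have hg0 : g x0 < 0 := mul_neg_of_neg_of_pos hlt (Real.exp_pos _)
        have : f1 x2 < 0 := by
          by_contra hcc; push_neg at hcc
          have : (0:ℝ) ≤ g x2 := mul_nonneg hcc (Real.exp_pos _).le
          linarith
        linarith
      -- g antitone on Ici x0, f1 < 0 there, h decreasing, contradiction with limit
      have hganti : AntitoneOn g (Ici x0) := by
        apply antiOn_aux (convex_Ici _) hDg
        intro x hx; rw [interior_Ici] at hx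
        have hxpos : 0 < x := lt_trans hx0pos hx
        have e := hode2 x hxpos.le
        have he : f2 x + 2*μ*x*f1 x = 2*γ*x*h x := by linarith
        rw [he]
        apply mul_nonpos_of_nonpos_of_nonneg _ (Real.exp_pos _).le
        nlinarith [hnegafter x hx, mul_pos hγ hxpos]
      have hf1neg : ∀ x, x0 ≤ x → f1 x < 0 := by
        intro x hx
        have h1 : g x ≤ g x0 := hganti self_mem_Ici hx hx
        have hg0 : g x0 < 0 := mul_neg_of_neg_of_pos hlt (Real.exp_pos _)
        by_contra hcc; push_neg at hcc
        have : (0:ℝ) ≤ g x := mul_nonneg hcc (Real.exp_pos _).le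
        linarith
      have hhanti : AntitoneOn h (Ici x0) := by
        apply antiOn_aux (convex_Ici _) hDh
        intro x hx; rw [interior_Ici] at hx
        exact (hf1neg x hx.le).le
      have hle : (0:ℝ) ≤ h x1 := by
        refine le_of_tendsto hlim ?_
        filter_upwards [eventually_ge_atTop x1] with x hx
        exact hhanti (show x1 ∈ Ici x0 from hx01.le) (show x ∈ Ici x0 from le_trans hx01.le hx) hx
      exact absurd hle (not_le.mpr (hint x1 hx01 le_rfl))
    · -- Case 2 : f1 x0 = 0
      have hgmono : MonotoneOn g (Icc 0 x0) := by
        apply monoOn_aux (convex_Icc _ _) hDg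
        intro x hx; rw [interior_Icc] at hx
        have e := hode2 x hx.1.le
        have he : f2 x + 2*μ*x*f1 x = 2*γ*x*h x := by linarith
        rw [he]
        apply mul_nonneg _ (Real.exp_pos _).le
        nlinarith [hposlt x hx.1.le hx.2, mul_pos hγ hx.1]
      have hf1le : ∀ x ∈ Icc (0:ℝ) x0, f1 x ≤ 0 := by
        intro x hx
        have h1 : g x ≤ g x0 := hgmono hx ⟨hx0nn, le_rfl⟩ hx.2
        have hg0 : g x0 = 0 := by
          show f1 x0 * Real.exp (μ * x0^2) = 0
          rw [heq]; ring
        by_contra hcc; push_neg at hcc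
        have : (0:ℝ) < g x := mul_pos hcc (Real.exp_pos _)
        linarith
      set C := 1 + 2*x0*(γ+μ) with hCdef
      set η : ℝ → ℝ := fun x => (h x - f1 x) * Real.exp (C*x) with hηdef
      have hDη : ∀ x, HasDerivAt η ((f1 x - f2 x + C*(h x - f1 x)) * Real.exp (C*x)) x := by
        intro x
        have := ((hDh x).fun_sub (hDf1 x)).fun_mul (hexpL C x)
        exact this.congr_deriv (by ring)
      have hmono : MonotoneOn η (Icc 0 x0) := by
        apply monoOn_aux (convex_Icc _ _) hDη
        intro x hx; rw [interior_Icc] at hx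
        have e := hode2 x hx.1.le
        have h1 : 0 < h x := hposlt x hx.1.le hx.2
        have h2 : f1 x ≤ 0 := hf1le x ⟨hx.1.le, hx.2.le⟩
        apply mul_nonneg _ (Real.exp_pos _).le
        rw [hCdef]
        have hxx0 : 0 ≤ x0 - x := by linarith [hx.2]
        nlinarith [mul_nonneg (mul_nonneg hμ.le hxx0) (neg_nonneg.mpr h2),
          mul_nonneg (mul_nonneg hx0nn hγ.le) (neg_nonneg.mpr h2),
          mul_nonneg (mul_nonneg hγ.le hxx0) h1.le,
          mul_nonneg (mul_nonneg hx0nn hμ.le) h1.le]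
      have hη01 : η 0 ≤ η x0 := hmono ⟨le_rfl, hx0nn⟩ ⟨hx0nn, le_rfl⟩ hx0nn
      have hη0 : η x0 = 0 := by
        show (h x0 - f1 x0) * Real.exp (C*x0) = 0
        rw [hx0zero, heq]; ring
      have hf10 : f1 0 ≤ 0 := hf1le 0 ⟨le_rfl, hx0nn⟩
      rw [hη0] at hη01
      have hη00 : η 0 = h 0 - f1 0 := by
        simp only [hηdef, mul_zero, Real.exp_zero, mul_one]
      rw [hη00] at hη01
      linarith
  -- STEP B : f1 < 0 on [0,∞)
  have hgcont : Continuous g :=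
    hd2.continuous.mul (Real.continuous_exp.comp ((continuous_const.mul (continuous_pow 2))))
  have hf1neg : ∀ x, 0 ≤ x → f1 x < 0 := by
    intro x1 hx1
    by_contra hc; push_neg at hc
    have hgmono : StrictMonoOn g (Ici x1) := by
      apply strictMonoOn_of_deriv_pos (convex_Ici _) hgcont.continuousOn
      intro x hx; rw [interior_Ici] at hx
      rw [(hDg x).deriv]
      have hx0 : 0 < x := lt_of_le_of_lt hx1 hx
      have e := hode2 x hx0.le
      have he : f2 x + 2*μ*x*f1 x = 2*γ*x*h x := by linarith
      rw [he]
      exact mul_pos (mul_pos (mul_pos (mul_pos two_pos hγ) hx0) (hpos x hx0.le)) (Real.exp_pos _)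
    have hf1pos : ∀ x, x1 < x → 0 < f1 x := by
      intro x hx
      have h1 : g x1 < g x := hgmono self_mem_Ici (le_of_lt hx) hx
      have h2 : 0 ≤ g x1 := mul_nonneg hc (Real.exp_pos _).le
      by_contra hcc; push_neg at hcc
      have : g x ≤ 0 := mul_nonpos_of_nonpos_of_nonneg hcc (Real.exp_pos _).le
      linarith
    have hmono : MonotoneOn h (Ici (x1+1)) := by
      apply monoOn_aux (convex_Ici _) hDh
      intro x hx; rw [interior_Ici] at hx
      exact (hf1pos x (by linarith [mem_Ioi.mp hx])).le
    have hle : h (x1+1) ≤ 0 := by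
      refine ge_of_tendsto hlim ?_
      filter_upwards [eventually_ge_atTop (x1+1)] with x hx
      exact hmono (self_mem_Ici) (show x ∈ Ici (x1+1) from hx) hx
    have := hpos (x1+1) (by linarith)
    linarith
  -- part (iv)
  have hiv : ∀ x, 0 < x → f1 x < 0 ∧ 0 < f2 x := by
    intro x hx
    refine ⟨hf1neg x hx.le, ?_⟩
    have e := hode2 x hx.le
    nlinarith [mul_pos (mul_pos hμ hx) (neg_pos.mpr (hf1neg x hx.le)),
      mul_pos (mul_pos hγ hx) (hpos x hx.le)]
  -- part (ii)
  have hii : f2 0 = 0 := by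
    have e := hode 0 le_rfl
    simp at e
    linarith
  -- part (iii) : integrability
  obtain ⟨k, hk, hkk⟩ : ∃ k : ℝ, 0 < k ∧ k*k = 2*γ :=
    ⟨Real.sqrt (2*γ), Real.sqrt_pos.mpr (by linarith), Real.mul_self_sqrt (by linarith)⟩
  -- g monotone on [0, ∞)
  have hgmono : MonotoneOn g (Ici 0) := by
    apply monoOn_aux (convex_Ici _) hDg
    intro x hx; rw [interior_Ici] at hx
    have e := hode2 x hx.le
    have he : f2 x + 2*μ*x*f1 x = 2*γ*x*h x := by linarith
    rw [he]
    have hx' : 0 < x := mem_Ioi.mp hx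
    exact mul_nonneg (mul_pos (mul_pos (mul_pos two_pos hγ) hx') (hpos x hx'.le)).le (Real.exp_pos _).le
  -- f1 tends to 0 at infinity
  have hf1lim : Tendsto f1 atTop (𝓝 0) := by
    have hlow : Tendsto (fun x => g 0 * (Real.exp (μ * x^2))⁻¹) atTop (𝓝 0) := by
      have h1 : Tendsto (fun x : ℝ => μ * x^2) atTop atTop :=
        (tendsto_pow_atTop (two_ne_zero)).const_mul_atTop hμ
      have h2 : Tendsto (fun x : ℝ => (Real.exp (μ * x^2))⁻¹) atTop (𝓝 0) :=
        (Real.tendsto_exp_atTop.comp h1).inv_tendsto_atTop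
      simpa using h2.const_mul (g 0)
    have hhigh : Tendsto (fun _ : ℝ => (0:ℝ)) atTop (𝓝 0) := tendsto_const_nhds
    apply tendsto_of_tendsto_of_tendsto_of_le_of_le' hlow hhigh
    · filter_upwards [eventually_ge_atTop (0:ℝ)] with x hx
      have h1 : g 0 ≤ g x := hgmono self_mem_Ici hx hx
      have h2 : f1 x = g x * (Real.exp (μ * x^2))⁻¹ := by
        show f1 x = f1 x * Real.exp (μ * x^2) * (Real.exp (μ * x^2))⁻¹
        field_simp
      rw [h2]
      exact mul_le_mul_of_nonneg_right h1 (by positivity)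
    · filter_upwards [eventually_ge_atTop (0:ℝ)] with x hx
      exact (hf1neg x hx).le
  -- r := (f1 + k h) e^{-kx} is monotone on [1,∞) and tends to 0
  set r : ℝ → ℝ := fun x => (f1 x + k * h x) * Real.exp (-k * x) with hrdef
  have hDr : ∀ x, HasDerivAt r ((f2 x + k*f1 x + (-k)*(f1 x + k*h x)) * Real.exp (-k*x)) x := by
    intro x
    have := ((hDf1 x).fun_add ((hDh x).const_mul k)).fun_mul (hexpL (-k) x)
    exact this.congr_deriv (by ring)
  have hrmono : MonotoneOn r (Ici 1) := by
    apply monoOn_aux (convex_Ici _) hDr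
    intro x hx; rw [interior_Ici] at hx
    have hxpos : (0:ℝ) < x := lt_trans one_pos (mem_Ioi.mp hx)
    have e := hode2 x hxpos.le
    apply mul_nonneg _ (Real.exp_pos _).le
    have expand : f2 x + k*f1 x + (-k)*(f1 x + k*h x) = f2 x - (k*k)*h x := by ring
    rw [expand, hkk]
    have hx1' : (0:ℝ) ≤ x - 1 := by linarith [mem_Ioi.mp hx]
    have hA : 0 ≤ μ * x * -f1 x := mul_nonneg (mul_pos hμ hxpos).le (neg_nonneg.mpr (hf1neg x hxpos.le).le)
    have hB : 0 ≤ γ * (x - 1) * h x := mul_nonneg (mul_nonneg hγ.le hx1') (hpos x hxpos.le).le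
    linarith [hA, hB, e]
  have hrlim : Tendsto r atTop (𝓝 0) := by
    have h1 : Tendsto (fun x => f1 x + k * h x) atTop (𝓝 0) := by
      simpa using hf1lim.add (hlim.const_mul k)
    have h2 : Tendsto (fun x : ℝ => Real.exp (-k * x)) atTop (𝓝 0) := by
      have h3 : Tendsto (fun x : ℝ => -k * x) atTop atBot :=
        (tendsto_const_mul_atBot_of_neg (neg_neg_iff_pos.mpr hk)).mpr tendsto_id
      exact Real.tendsto_exp_atBot.comp h3
    rw [hrdef]
    have h4 := h1.mul h2
    rw [zero_mul] at h4
    exact h4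
  have hrle : ∀ x, 1 ≤ x → f1 x + k * h x ≤ 0 := by
    intro x hx
    have h1 : r x ≤ 0 := by
      refine ge_of_tendsto hrlim ?_
      filter_upwards [eventually_ge_atTop x] with y hy
      exact hrmono (show x ∈ Ici 1 from hx) (show y ∈ Ici 1 from le_trans hx hy) hy
    by_contra hcc; push_neg at hcc
    have : 0 < r x := mul_pos hcc (Real.exp_pos _)
    linarith
  -- p := h e^{kx} antitone on [1,∞) gives exponential bound
  set p : ℝ → ℝ := fun x => h x * Real.exp (k * x) with hpdef
  have hDp : ∀ x, HasDerivAt p ((f1 x + k * h x) * Real.exp (k*x)) x := by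
    intro x
    have := (hDh x).fun_mul (hexpL k x)
    exact this.congr_deriv (by ring)
  have hpanti : AntitoneOn p (Ici 1) := by
    apply antiOn_aux (convex_Ici _) hDp
    intro x hx; rw [interior_Ici] at hx
    exact mul_nonpos_of_nonpos_of_nonneg (hrle x hx.le) (Real.exp_pos _).le
  have hbound : ∀ x, 1 ≤ x → h x ≤ (h 1 * Real.exp k) * Real.exp (-k * x) := by
    intro x hx
    have key : h x * Real.exp (k*x) ≤ h 1 * Real.exp (k*1) :=
      hpanti self_mem_Ici (show x ∈ Ici 1 from hx) hx
    have hE1 : Real.exp (k*x) * Real.exp (-k*x) = 1 := by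
      rw [← Real.exp_add]; ring_nf; exact Real.exp_zero
    have step := mul_le_mul_of_nonneg_right key (Real.exp_pos (-k*x)).le
    have l1 : h x * Real.exp (k*x) * Real.exp (-k*x) = h x := by
      rw [mul_assoc, hE1, mul_one]
    have l2 : h 1 * Real.exp (k*1) * Real.exp (-k*x) = (h 1 * Real.exp k) * Real.exp (-k*x) := by
      norm_num
    rw [l1, l2] at step
    exact step
  have hint1 : IntegrableOn h (Icc (0:ℝ) 1) := hd1.continuous.continuousOn.integrableOn_Icc
  have hint2 : IntegrableOn h (Ici (1:ℝ)) := by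
    have hexpInt : IntegrableOn (fun x => Real.exp (-k*x)) (Ioi (1:ℝ)) :=
      exp_neg_integrableOn_Ioi 1 hk
    have hmul : IntegrableOn (fun x => (h 1 * Real.exp k) * Real.exp (-k*x)) (Ioi (1:ℝ)) :=
      hexpInt.const_mul _
    rw [integrableOn_Ici_iff_integrableOn_Ioi]
    apply hmul.mono' (hd1.continuous.aestronglyMeasurable.restrict)
    filter_upwards [ae_restrict_mem measurableSet_Ioi] with x hx
    rw [Real.norm_eq_abs, abs_of_pos (hpos x (by linarith [mem_Ioi.mp hx]))]
    exact hbound x (le_of_lt (mem_Ioi.mp hx))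
  have hiii : IntegrableOn h (Ici (0:ℝ)) := by
    have hu : IntegrableOn h (Icc 0 1 ∪ Ici 1) := hint1.union hint2
    apply hu.mono_set
    intro x hx
    rcases le_total x 1 with hc | hc
    · exact Or.inl ⟨hx, hc⟩
    · exact Or.inr hc
  exact ⟨hpos, hii, hiii, hiv⟩
end

section
/- Let f, φ, ψ, Φ, Ψ : [0,∞) → [0,∞) be continuous nonnegative functions such that f is continuously differentiable, f(x) → 0 as x → ∞, the integral ∫_z^∞ f(x)·φ(x) dx is finite for every z ≥ 0, and f'(z) = −( Ψ(z)·∫_z^∞ f(x)·φ(x) dx + Φ(z)·∫₀^z f(x)·ψ(x) dx ) for all z ≥ 0. Then ∫₀^∞ f(x)·( φ(x)·∫₀ˣ Ψ(y) dy + ψ(x)·∫ₓ^∞ Φ(y) dy ) dx = f(0). -/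
open Real Filter Set MeasureTheory

open scoped Topology

noncomputable def prim (g : ℝ → ℝ) : ℝ → ℝ :=
  fun z => ∫ t in (0:ℝ)..z, (Set.Ici (0:ℝ)).indicator g t

lemma ind_ii {g : ℝ → ℝ} (hg : ContinuousOn g (Ici 0)) (a b : ℝ) :
    IntervalIntegrable ((Ici (0:ℝ)).indicator g) volume a b := by
  rw [intervalIntegrable_iff, IntegrableOn, integrable_indicator_iff measurableSet_Ici,
    IntegrableOn, Measure.restrict_restrict measurableSet_Ici]
  have h1 : IntegrableOn g (Icc 0 (max a b)) :=
    (hg.mono Icc_subset_Ici_self).integrableOn_Icc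
  exact h1.mono_set (fun x hx => ⟨hx.1, hx.2.2⟩)

lemma prim_continuous {g : ℝ → ℝ} (hg : ContinuousOn g (Ici 0)) : Continuous (prim g) :=
  intervalIntegral.continuous_primitive (ind_ii hg) 0

lemma prim_eq {g : ℝ → ℝ} (hg : ContinuousOn g (Ici 0)) {z : ℝ} (hz : 0 ≤ z) :
    prim g z = ∫ t in (0:ℝ)..z, g t := by
  apply intervalIntegral.integral_congr
  intro x hx
  rw [uIcc_of_le hz] at hx
  exact indicator_of_mem (mem_Ici.2 hx.1) g

lemma prim_zero (g : ℝ → ℝ) : prim g 0 = 0 := intervalIntegral.integral_same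

lemma prim_hasDerivAt {g : ℝ → ℝ} (hg : ContinuousOn g (Ici 0)) {T : ℝ} (hT : 0 < T) :
    HasDerivAt (prim g) (g T) T := by
  have heq : (Set.Ici (0:ℝ)).indicator g =ᶠ[𝓝 T] g := by
    filter_upwards [Ioi_mem_nhds hT] with x hx
    exact indicator_of_mem (le_of_lt hx) g
  have hca : ContinuousAt g T := (hg T (le_of_lt hT)).continuousAt (Ici_mem_nhds hT)
  have hca' : ContinuousAt ((Set.Ici (0:ℝ)).indicator g) T := hca.congr heq.symm
  have hmeas : StronglyMeasurableAtFilter ((Set.Ici (0:ℝ)).indicator g) (𝓝 T) := by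
    refine ⟨Ioo (T/2) (T+1), Ioo_mem_nhds (by linarith) (by linarith), ?_⟩
    exact ((ind_ii hg (T/2) (T+1)).1).aestronglyMeasurable.mono_measure
      (Measure.restrict_mono Ioo_subset_Ioc_self le_rfl)
  have h := intervalIntegral.integral_hasDerivAt_right (ind_ii hg 0 T) hmeas hca'
  rwa [indicator_of_mem (mem_Ici.2 hT.le) g] at h

lemma prim_mono {g : ℝ → ℝ} (hg : ContinuousOn g (Ici 0)) (hgn : ∀ x ≥ (0:ℝ), 0 ≤ g x) :
    Monotone (prim g) := by
  intro S T hST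
  have h1 := intervalIntegral.integral_interval_sub_left (ind_ii hg 0 T) (ind_ii hg 0 S)
  have h2 : 0 ≤ ∫ t in S..T, (Ici (0:ℝ)).indicator g t :=
    intervalIntegral.integral_nonneg hST
      (fun x _ => indicator_nonneg (fun y hy => hgn y hy) x)
  unfold prim
  linarith

lemma tail_eq {p : ℝ → ℝ} (hpi : IntegrableOn p (Ioi (0:ℝ))) {z : ℝ} (hz : 0 ≤ z) :
    (∫ x in Ioi z, p x) = (∫ x in Ioi (0:ℝ), p x) - ∫ t in (0:ℝ)..z, p t := by
  have hu : Ioc 0 z ∪ Ioi z = Ioi (0:ℝ) := Ioc_union_Ioi_eq_Ioi hz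
  have h1 : IntegrableOn p (Ioc 0 z) := hpi.mono_set (fun x hx => hx.1)
  have h2 : IntegrableOn p (Ioi z) := hpi.mono_set (Ioi_subset_Ioi hz)
  have h3 := setIntegral_union (Ioc_disjoint_Ioi le_rfl) measurableSet_Ioi h1 h2
  rw [hu] at h3
  rw [intervalIntegral.integral_of_le hz]
  linarith

lemma tail_tendsto {p : ℝ → ℝ} (hpi : IntegrableOn p (Ioi (0:ℝ))) :
    Tendsto (fun z => ∫ x in Ioi z, p x) atTop (𝓝 0) := by
  have h := intervalIntegral_tendsto_integral_Ioi 0 hpi tendsto_id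
  have h2 : Tendsto (fun z => (∫ x in Ioi (0:ℝ), p x) - ∫ t in (0:ℝ)..z, p t) atTop
      (𝓝 ((∫ x in Ioi (0:ℝ), p x) - ∫ x in Ioi (0:ℝ), p x)) := tendsto_const_nhds.sub h
  rw [sub_self] at h2
  apply h2.congr'
  filter_upwards [eventually_ge_atTop (0:ℝ)] with z hz
  exact (tail_eq hpi hz).symm

lemma parts_easy (p q : ℝ → ℝ) (hpc : ContinuousOn p (Ici 0)) (hqc : ContinuousOn q (Ici 0))
    (hpn : ∀ x ≥ (0:ℝ), 0 ≤ p x) (hqn : ∀ x ≥ (0:ℝ), 0 ≤ q x)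
    (hpi : IntegrableOn p (Ioi (0:ℝ)))
    (hpq : IntegrableOn (fun x => p x * ∫ y in (0:ℝ)..x, q y) (Ioi (0:ℝ))) :
    IntegrableOn (fun z => q z * ∫ x in Ioi z, p x) (Ioi (0:ℝ)) ∧
      (∫ x in Ioi (0:ℝ), p x * ∫ y in (0:ℝ)..x, q y)
        = ∫ z in Ioi (0:ℝ), q z * ∫ x in Ioi z, p x := by
  set A0 := ∫ x in Ioi (0:ℝ), p x with hA0
  have hPp := prim_continuous hpc
  have hPq := prim_continuous hqc
  have hqmono := prim_mono hqc hqn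
  have e1 : ∀ z ≥ (0:ℝ), (∫ x in Ioi z, p x) = A0 - prim p z := fun z hz => by
    rw [tail_eq hpi hz, prim_eq hpc hz]
  have htl_nonneg : ∀ z ≥ (0:ℝ), 0 ≤ A0 - prim p z := fun z hz => by
    rw [← e1 z hz]
    exact setIntegral_nonneg measurableSet_Ioi fun x hx => hpn x (hz.trans (le_of_lt hx))
  have hPq_nonneg : ∀ z ≥ (0:ℝ), 0 ≤ prim q z := fun z hz => by
    have h := hqmono hz
    rw [prim_zero] at h
    exact h
  have hcont1 : ∀ T : ℝ, ContinuousOn (fun x => q x * (A0 - prim p x)) (Icc 0 T) :=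
    fun T => (hqc.mono Icc_subset_Ici_self).mul ((continuous_const.sub hPp).continuousOn)
  have hcont2 : ∀ T : ℝ, ContinuousOn (fun x => p x * prim q x) (Icc 0 T) :=
    fun T => (hpc.mono Icc_subset_Ici_self).mul hPq.continuousOn
  have hii1 : ∀ T ≥ (0:ℝ), IntervalIntegrable (fun x => q x * (A0 - prim p x)) volume 0 T :=
    fun T hT => (hcont1 T).intervalIntegrable_of_Icc hT
  have hii2 : ∀ T ≥ (0:ℝ), IntervalIntegrable (fun x => p x * prim q x) volume 0 T :=
    fun T hT => (hcont2 T).intervalIntegrable_of_Icc hT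
  set G : ℝ → ℝ := fun z => (A0 - prim p z) * prim q z with hG
  have hGcont : Continuous G := (continuous_const.sub hPp).mul hPq
  have hG0 : G 0 = 0 := by simp [hG, prim_zero]
  have hGderiv : ∀ x ∈ Ioi (0:ℝ), HasDerivAt G (q x * (A0 - prim p x) - p x * prim q x) x := by
    intro x hx
    have h1 : HasDerivAt (fun z => A0 - prim p z) (-(p x)) x :=
      (prim_hasDerivAt hpc hx).const_sub A0
    have h2 := prim_hasDerivAt hqc hx
    have h3 := h1.mul h2
    convert h3 using 1
    · rfl
    · rfl
    · rfl
    ring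
  have hFTC' : ∀ T ≥ (0:ℝ), ∫ x in (0:ℝ)..T, q x * (A0 - prim p x)
      = (∫ x in (0:ℝ)..T, p x * prim q x) + G T := by
    intro T hT
    have h := intervalIntegral.integral_eq_sub_of_hasDerivAt_of_le hT hGcont.continuousOn
      (fun x hx => hGderiv x hx.1) ((hii1 T hT).sub (hii2 T hT))
    rw [hG0, sub_zero] at h
    rw [intervalIntegral.integral_sub (hii1 T hT) (hii2 T hT)] at h
    linarith
  have hpq2 : IntegrableOn (fun x => p x * prim q x) (Ioi (0:ℝ)) :=
    hpq.congr_fun (fun x hx => by rw [prim_eq hqc (le_of_lt (mem_Ioi.1 hx))]) measurableSet_Ioi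
  set Ipq := ∫ x in Ioi (0:ℝ), p x * prim q x with hIpq
  have hpPq_nonneg : ∀ x ≥ (0:ℝ), 0 ≤ p x * prim q x := fun x hx =>
    mul_nonneg (hpn x hx) (hPq_nonneg x hx)
  have htail_pPq : ∀ T ≥ (0:ℝ),
      (∫ x in Ioi T, p x * prim q x) = Ipq - ∫ x in (0:ℝ)..T, p x * prim q x :=
    fun T hT => tail_eq hpq2 hT
  have htail_pPq_nonneg : ∀ T ≥ (0:ℝ), 0 ≤ ∫ x in Ioi T, p x * prim q x := fun T hT =>
    setIntegral_nonneg measurableSet_Ioi fun x hx => hpPq_nonneg x (hT.trans (le_of_lt hx))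
  have hGle : ∀ T ≥ (0:ℝ), G T ≤ ∫ x in Ioi T, p x * prim q x := by
    intro T hT
    have h1 : G T = ∫ x in Ioi T, p x * prim q T := by
      show (A0 - prim p T) * prim q T = _
      rw [integral_mul_const, e1 T hT]
    rw [h1]
    apply setIntegral_mono_on
    · exact (hpi.mono_set (Ioi_subset_Ioi hT)).mul_const _
    · exact hpq2.mono_set (Ioi_subset_Ioi hT)
    · exact measurableSet_Ioi
    · intro x hx
      exact mul_le_mul_of_nonneg_left (hqmono (le_of_lt hx)) (hpn x (hT.trans (le_of_lt hx)))
  have hGtend : Tendsto G atTop (𝓝 0) := by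
    have h2 : Tendsto (fun T => ∫ x in Ioi T, p x * prim q x) atTop (𝓝 0) := tail_tendsto hpq2
    apply tendsto_of_tendsto_of_tendsto_of_le_of_le' tendsto_const_nhds h2
    · filter_upwards [eventually_ge_atTop (0:ℝ)] with T hT
      exact mul_nonneg (htl_nonneg T hT) (hPq_nonneg T hT)
    · filter_upwards [eventually_ge_atTop (0:ℝ)] with T hT
      exact hGle T hT
  have hint0T : ∀ T ≥ (0:ℝ), 0 ≤ ∫ x in (0:ℝ)..T, p x * prim q x := fun T hT =>
    intervalIntegral.integral_nonneg hT (fun x hx => hpPq_nonneg x hx.1)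
  have hqtl2 : IntegrableOn (fun z => q z * (A0 - prim p z)) (Ioi (0:ℝ)) := by
    apply integrableOn_Ioi_of_intervalIntegral_norm_bounded (Ipq + Ipq) 0
      (fun T => ?_) (tendsto_id (α := ℝ))
    · filter_upwards [eventually_ge_atTop (0:ℝ)] with T hT
      have habs : (∫ x in (0:ℝ)..T, ‖q x * (A0 - prim p x)‖)
          = ∫ x in (0:ℝ)..T, q x * (A0 - prim p x) := by
        apply intervalIntegral.integral_congr
        intro x hx
        rw [uIcc_of_le hT] at hx
        exact norm_of_nonneg (mul_nonneg (hqn x hx.1) (htl_nonneg x hx.1))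
      simp only [id_eq]
      rw [habs, hFTC' T hT]
      have h1 : (∫ x in (0:ℝ)..T, p x * prim q x) ≤ Ipq := by
        have := htail_pPq T hT
        have := htail_pPq_nonneg T hT
        linarith
      have h2 : G T ≤ Ipq := by
        have := hGle T hT
        have := htail_pPq T hT
        have := hint0T T hT
        linarith
      linarith
    · exact ((hcont1 (max T 0)).integrableOn_Icc).mono_set
        (fun x hx => ⟨le_of_lt hx.1, le_max_of_le_left hx.2⟩)
  have hH'int : IntegrableOn (fun x => q x * (A0 - prim p x) - p x * prim q x) (Ioi (0:ℝ)) :=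
    hqtl2.sub hpq2
  have hmain : ∫ x in Ioi (0:ℝ), (q x * (A0 - prim p x) - p x * prim q x) = 0 := by
    have h := integral_Ioi_of_hasDerivAt_of_tendsto hGcont.continuousWithinAt hGderiv hH'int hGtend
    rw [hG0, sub_zero] at h
    exact h
  have heq2 : ∫ x in Ioi (0:ℝ), q x * (A0 - prim p x) = Ipq := by
    have h := integral_sub hqtl2 hpq2
    rw [hmain] at h
    rw [hIpq]
    linarith [h]
  constructor
  · exact hqtl2.congr_fun (fun z hz => by rw [e1 z (le_of_lt (mem_Ioi.1 hz))]) measurableSet_Ioi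
  · calc (∫ x in Ioi (0:ℝ), p x * ∫ y in (0:ℝ)..x, q y)
        = ∫ x in Ioi (0:ℝ), p x * prim q x := setIntegral_congr_fun measurableSet_Ioi
          (fun x hx => by rw [prim_eq hqc (le_of_lt (mem_Ioi.1 hx))])
      _ = ∫ z in Ioi (0:ℝ), q z * (A0 - prim p z) := heq2.symm
      _ = ∫ z in Ioi (0:ℝ), q z * ∫ x in Ioi z, p x := setIntegral_congr_fun measurableSet_Ioi
          (fun z hz => by rw [e1 z (le_of_lt (mem_Ioi.1 hz))])

lemma parts_hard (p q : ℝ → ℝ) (hpc : ContinuousOn p (Ici 0)) (hqc : ContinuousOn q (Ici 0))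
    (hpn : ∀ x ≥ (0:ℝ), 0 ≤ p x) (hqn : ∀ x ≥ (0:ℝ), 0 ≤ q x)
    (hpi : IntegrableOn p (Ioi (0:ℝ)))
    (hqt : IntegrableOn (fun z => q z * ∫ x in Ioi z, p x) (Ioi (0:ℝ))) :
    IntegrableOn (fun x => p x * ∫ y in (0:ℝ)..x, q y) (Ioi (0:ℝ)) ∧
      (∫ x in Ioi (0:ℝ), p x * ∫ y in (0:ℝ)..x, q y)
        = ∫ z in Ioi (0:ℝ), q z * ∫ x in Ioi z, p x := by
  set A0 := ∫ x in Ioi (0:ℝ), p x with hA0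
  have hPp := prim_continuous hpc
  have hPq := prim_continuous hqc
  have hqmono := prim_mono hqc hqn
  have e1 : ∀ z ≥ (0:ℝ), (∫ x in Ioi z, p x) = A0 - prim p z := fun z hz => by
    rw [tail_eq hpi hz, prim_eq hpc hz]
  have htl_nonneg : ∀ z ≥ (0:ℝ), 0 ≤ A0 - prim p z := fun z hz => by
    rw [← e1 z hz]
    exact setIntegral_nonneg measurableSet_Ioi fun x hx => hpn x (hz.trans (le_of_lt hx))
  have hPq_nonneg : ∀ z ≥ (0:ℝ), 0 ≤ prim q z := fun z hz => by
    have h := hqmono hz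
    rw [prim_zero] at h
    exact h
  have hcont1 : ∀ T : ℝ, ContinuousOn (fun x => q x * (A0 - prim p x)) (Icc 0 T) :=
    fun T => (hqc.mono Icc_subset_Ici_self).mul ((continuous_const.sub hPp).continuousOn)
  have hcont2 : ∀ T : ℝ, ContinuousOn (fun x => p x * prim q x) (Icc 0 T) :=
    fun T => (hpc.mono Icc_subset_Ici_self).mul hPq.continuousOn
  have hii1 : ∀ T ≥ (0:ℝ), IntervalIntegrable (fun x => q x * (A0 - prim p x)) volume 0 T :=
    fun T hT => (hcont1 T).intervalIntegrable_of_Icc hT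
  have hii2 : ∀ T ≥ (0:ℝ), IntervalIntegrable (fun x => p x * prim q x) volume 0 T :=
    fun T hT => (hcont2 T).intervalIntegrable_of_Icc hT
  set G : ℝ → ℝ := fun z => (A0 - prim p z) * prim q z with hG
  have hGcont : Continuous G := (continuous_const.sub hPp).mul hPq
  have hG0 : G 0 = 0 := by simp [hG, prim_zero]
  have hGderiv : ∀ x ∈ Ioi (0:ℝ), HasDerivAt G (q x * (A0 - prim p x) - p x * prim q x) x := by
    intro x hx
    have h1 : HasDerivAt (fun z => A0 - prim p z) (-(p x)) x :=
      (prim_hasDerivAt hpc hx).const_sub A0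
    have h2 := prim_hasDerivAt hqc hx
    have h3 := h1.mul h2
    convert h3 using 1
    · rfl
    · rfl
    · rfl
    ring
  have hFTC' : ∀ T ≥ (0:ℝ), ∫ x in (0:ℝ)..T, q x * (A0 - prim p x)
      = (∫ x in (0:ℝ)..T, p x * prim q x) + G T := by
    intro T hT
    have h := intervalIntegral.integral_eq_sub_of_hasDerivAt_of_le hT hGcont.continuousOn
      (fun x hx => hGderiv x hx.1) ((hii1 T hT).sub (hii2 T hT))
    rw [hG0, sub_zero] at h
    rw [intervalIntegral.integral_sub (hii1 T hT) (hii2 T hT)] at h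
    linarith
  have hqtl2 : IntegrableOn (fun z => q z * (A0 - prim p z)) (Ioi (0:ℝ)) :=
    hqt.congr_fun (fun z hz => by dsimp only; rw [e1 z (le_of_lt (mem_Ioi.1 hz))]) measurableSet_Ioi
  set Iq := ∫ z in Ioi (0:ℝ), q z * (A0 - prim p z) with hIq
  have hqtl_nonneg : ∀ z ≥ (0:ℝ), 0 ≤ q z * (A0 - prim p z) := fun z hz =>
    mul_nonneg (hqn z hz) (htl_nonneg z hz)
  have hint0T_le : ∀ T ≥ (0:ℝ), (∫ x in (0:ℝ)..T, q x * (A0 - prim p x)) ≤ Iq := by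
    intro T hT
    have h1 := tail_eq hqtl2 hT
    have h2 : 0 ≤ ∫ z in Ioi T, q z * (A0 - prim p z) :=
      setIntegral_nonneg measurableSet_Ioi fun x hx => hqtl_nonneg x (hT.trans (le_of_lt hx))
    linarith
  have hpq2 : IntegrableOn (fun x => p x * prim q x) (Ioi (0:ℝ)) := by
    apply integrableOn_Ioi_of_intervalIntegral_norm_bounded Iq 0
      (fun T => ?_) (tendsto_id (α := ℝ))
    · filter_upwards [eventually_ge_atTop (0:ℝ)] with T hT
      simp only [id_eq]
      have habs : (∫ x in (0:ℝ)..T, ‖p x * prim q x‖)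
          = ∫ x in (0:ℝ)..T, p x * prim q x := by
        apply intervalIntegral.integral_congr
        intro x hx
        rw [uIcc_of_le hT] at hx
        exact norm_of_nonneg (mul_nonneg (hpn x hx.1) (hPq_nonneg x hx.1))
      rw [habs]
      have h1 := hFTC' T hT
      have h2 : 0 ≤ G T := mul_nonneg (htl_nonneg T hT) (hPq_nonneg T hT)
      have h3 := hint0T_le T hT
      linarith
    · exact ((hcont2 (max T 0)).integrableOn_Icc).mono_set
        (fun x hx => ⟨le_of_lt hx.1, le_max_of_le_left hx.2⟩)
  have hpq : IntegrableOn (fun x => p x * ∫ y in (0:ℝ)..x, q y) (Ioi (0:ℝ)) :=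
    hpq2.congr_fun (fun x hx => by rw [← prim_eq hqc (le_of_lt (mem_Ioi.1 hx))]) measurableSet_Ioi
  exact ⟨hpq, (parts_easy p q hpc hqc hpn hqn hpi hpq).2⟩

/-- Fubini identity for the mean time between jumps under the invariant
distribution of the Brownian ratchet: if `f, φ, ψ, Φ, Ψ` are continuous and nonnegative
on `[0,∞)`, `f` is continuously differentiable with `f(x) → 0` at infinity,
`∫_z^∞ f·φ < ∞` for every `z ≥ 0`, and
`f'(z) = −(Ψ(z)∫_z^∞ f·φ + Φ(z)∫₀^z f·ψ)` for all `z ≥ 0`, then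
`∫₀^∞ f(x)·(φ(x)∫₀ˣΨ + ψ(x)∫ₓ^∞Φ) dx = f(0)`. -/
theorem invariant_mean_jump_time (f φ ψ Φ Ψ : ℝ → ℝ)
    (hf_cont : ContinuousOn f (Set.Ici 0)) (hφ_cont : ContinuousOn φ (Set.Ici 0))
    (hψ_cont : ContinuousOn ψ (Set.Ici 0)) (hΦ_cont : ContinuousOn Φ (Set.Ici 0))
    (hΨ_cont : ContinuousOn Ψ (Set.Ici 0))
    (hf_nonneg : ∀ x ≥ (0:ℝ), 0 ≤ f x) (hφ_nonneg : ∀ x ≥ (0:ℝ), 0 ≤ φ x)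
    (hψ_nonneg : ∀ x ≥ (0:ℝ), 0 ≤ ψ x) (hΦ_nonneg : ∀ x ≥ (0:ℝ), 0 ≤ Φ x)
    (hΨ_nonneg : ∀ x ≥ (0:ℝ), 0 ≤ Ψ x)
    (hf : ContDiff ℝ 1 f)
    (hf_lim : Tendsto f atTop (nhds 0))
    (hfφ_int : ∀ z ≥ (0:ℝ), IntegrableOn (fun x => f x * φ x) (Set.Ioi z))
    (hf' : ∀ z ≥ (0:ℝ), deriv f z =
      -(Ψ z * (∫ x in Set.Ioi z, f x * φ x) + Φ z * (∫ x in (0:ℝ)..z, f x * ψ x))) :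
    ∫ x in Set.Ioi (0:ℝ),
        f x * (φ x * (∫ y in (0:ℝ)..x, Ψ y) + ψ x * (∫ y in Set.Ioi x, Φ y))
      = f 0 := by
  have hfφc : ContinuousOn (fun x => f x * φ x) (Ici 0) := hf_cont.mul hφ_cont
  have hfψc : ContinuousOn (fun x => f x * ψ x) (Ici 0) := hf_cont.mul hψ_cont
  have hfφn : ∀ x ≥ (0:ℝ), 0 ≤ f x * φ x := fun x hx =>
    mul_nonneg (hf_nonneg x hx) (hφ_nonneg x hx)
  have hfψn : ∀ x ≥ (0:ℝ), 0 ≤ f x * ψ x := fun x hx =>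
    mul_nonneg (hf_nonneg x hx) (hψ_nonneg x hx)
  have hA_nonneg : ∀ z ≥ (0:ℝ), 0 ≤ ∫ x in Ioi z, f x * φ x := fun z hz =>
    setIntegral_nonneg measurableSet_Ioi fun x hx => hfφn x (hz.trans (le_of_lt hx))
  have hB_nonneg : ∀ z ≥ (0:ℝ), 0 ≤ ∫ x in (0:ℝ)..z, f x * ψ x := fun z hz =>
    intervalIntegral.integral_nonneg hz (fun x hx => hfψn x hx.1)
  have hderivf : ∀ x : ℝ, HasDerivAt f (deriv f x) x := fun x =>
    ((hf.differentiable one_ne_zero) x).hasDerivAt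
  have hneg_deriv : ∀ x ∈ Ioi (0:ℝ), HasDerivAt (fun y => -f y) (-deriv f x) x :=
    fun x _ => (hderivf x).neg
  have hsum_eq : ∀ x ∈ Ioi (0:ℝ),
      Ψ x * (∫ y in Ioi x, f y * φ y) + Φ x * (∫ y in (0:ℝ)..x, f y * ψ y) = -deriv f x := by
    intro x hx
    rw [hf' x (le_of_lt (mem_Ioi.1 hx)), neg_neg]
  have hnonneg' : ∀ x ∈ Ioi (0:ℝ), 0 ≤ -deriv f x := by
    intro x hx
    rw [← hsum_eq x hx]
    have hx0 := le_of_lt (mem_Ioi.1 hx)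
    exact add_nonneg (mul_nonneg (hΨ_nonneg x hx0) (hA_nonneg x hx0))
      (mul_nonneg (hΦ_nonneg x hx0) (hB_nonneg x hx0))
  have hlim' : Tendsto (fun y => -f y) atTop (𝓝 0) := by
    have h := hf_lim.neg
    rwa [neg_zero] at h
  have hcw : ContinuousWithinAt (fun y => -f y) (Ici 0) 0 :=
    (hf.continuous.neg).continuousWithinAt
  have hint : IntegrableOn (fun x => -deriv f x) (Ioi (0:ℝ)) :=
    integrableOn_Ioi_deriv_of_nonneg hcw hneg_deriv hnonneg' hlim'
  have hval : ∫ x in Ioi (0:ℝ), -deriv f x = f 0 := by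
    have h := integral_Ioi_of_hasDerivAt_of_nonneg hcw hneg_deriv hnonneg' hlim'
    simpa using h
  have hsum_int : IntegrableOn (fun x => Ψ x * (∫ y in Ioi x, f y * φ y)
      + Φ x * (∫ y in (0:ℝ)..x, f y * ψ y)) (Ioi (0:ℝ)) :=
    hint.congr_fun (fun x hx => (hsum_eq x hx).symm) measurableSet_Ioi
  have hsum_val : ∫ x in Ioi (0:ℝ), (Ψ x * (∫ y in Ioi x, f y * φ y)
      + Φ x * (∫ y in (0:ℝ)..x, f y * ψ y)) = f 0 := by
    rw [setIntegral_congr_fun measurableSet_Ioi (fun x hx => hsum_eq x hx)]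
    exact hval
  have hfφ0 := hfφ_int 0 le_rfl
  have hAcont : ContinuousOn (fun z => ∫ x in Ioi z, f x * φ x) (Ici 0) := by
    have hg : ContinuousOn
        (fun z => (∫ x in Ioi (0:ℝ), f x * φ x) - prim (fun x => f x * φ x) z) (Ici 0) :=
      (continuous_const.sub (prim_continuous hfφc)).continuousOn
    exact hg.congr (fun z hz => by dsimp only; rw [tail_eq hfφ0 hz, prim_eq hfφc hz])
  have hΨA_int : IntegrableOn (fun z => Ψ z * ∫ x in Ioi z, f x * φ x) (Ioi (0:ℝ)) := by
    apply Integrable.mono' hsum_int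
    · exact ((hΨ_cont.mul hAcont).mono Ioi_subset_Ici_self).aestronglyMeasurable measurableSet_Ioi
    · rw [ae_restrict_iff' measurableSet_Ioi]
      refine Eventually.of_forall (fun x hx => ?_)
      have hx0 := le_of_lt (mem_Ioi.1 hx)
      rw [norm_of_nonneg (mul_nonneg (hΨ_nonneg x hx0) (hA_nonneg x hx0))]
      have h2 := mul_nonneg (hΦ_nonneg x hx0) (hB_nonneg x hx0)
      linarith
  have hΦB_int : IntegrableOn (fun z => Φ z * ∫ x in (0:ℝ)..z, f x * ψ x) (Ioi (0:ℝ)) := by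
    have h := hsum_int.sub hΨA_int
    exact IntegrableOn.congr_fun h (fun x _ => by simp only [Pi.sub_apply]; ring)
      measurableSet_Ioi
  have hsplit : (∫ z in Ioi (0:ℝ), Ψ z * ∫ x in Ioi z, f x * φ x)
      + (∫ z in Ioi (0:ℝ), Φ z * ∫ x in (0:ℝ)..z, f x * ψ x) = f 0 := by
    rw [← integral_add hΨA_int hΦB_int]
    exact hsum_val
  obtain ⟨hT1_int, hT1_eq⟩ := parts_hard (fun x => f x * φ x) Ψ hfφc hΨ_cont hfφn
    hΨ_nonneg hfφ0 hΨA_int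
  by_cases hΦi : IntegrableOn Φ (Ioi (0:ℝ))
  · obtain ⟨hT2_int, hT2_eq⟩ := parts_easy Φ (fun x => f x * ψ x) hΦ_cont hfψc hΦ_nonneg
      hfψn hΦi hΦB_int
    calc ∫ x in Ioi (0:ℝ), f x * (φ x * (∫ y in (0:ℝ)..x, Ψ y) + ψ x * ∫ y in Ioi x, Φ y)
        = ∫ x in Ioi (0:ℝ), ((f x * φ x) * (∫ y in (0:ℝ)..x, Ψ y)
            + (f x * ψ x) * ∫ y in Ioi x, Φ y) :=
          setIntegral_congr_fun measurableSet_Ioi (fun x _ => by ring)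
      _ = (∫ x in Ioi (0:ℝ), (f x * φ x) * ∫ y in (0:ℝ)..x, Ψ y)
            + ∫ x in Ioi (0:ℝ), (f x * ψ x) * ∫ y in Ioi x, Φ y :=
          integral_add hT1_int hT2_int
      _ = f 0 := by rw [hT1_eq, ← hT2_eq]; exact hsplit
  · have hψ0 : ∀ y ≥ (0:ℝ), f y * ψ y = 0 := by
      intro y hy
      by_contra hne
      have hc : 0 < f y * ψ y := lt_of_le_of_ne (hfψn y hy) (Ne.symm hne)
      set c := f y * ψ y with hcdef
      have hev : {z | c/2 < f z * ψ z} ∈ 𝓝[Ici 0] y :=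
        (hfψc y hy).eventually (eventually_gt_nhds (half_lt_self hc))
      obtain ⟨ε, hε, hsub⟩ := Metric.mem_nhdsWithin_iff.1 hev
      set δ := ε/2 with hδdef
      have hδpos : 0 < δ := half_pos hε
      have hII : ∀ a b : ℝ, 0 ≤ a → a ≤ b → IntervalIntegrable (fun x => f x * ψ x) volume a b :=
        fun a b ha hab => (hfψc.mono (fun x hx => ha.trans hx.1)).intervalIntegrable_of_Icc hab
      have hin : ∀ x ∈ Icc y (y + δ), c/2 ≤ f x * ψ x := by
        intro x hx
        refine le_of_lt (hsub ⟨Metric.mem_ball.2 ?_, hy.trans hx.1⟩)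
        rw [Real.dist_eq, abs_of_nonneg (by linarith [hx.1])]
        have := hx.2
        simp only [hδdef] at this ⊢
        linarith
      have hmid : (c/2) * δ ≤ ∫ x in y..(y+δ), f x * ψ x := by
        have h := intervalIntegral.integral_mono_on (by linarith : y ≤ y + δ)
          intervalIntegrable_const (hII y (y+δ) hy (by linarith)) hin
        rw [intervalIntegral.integral_const] at h
        have harith : (y + δ - y) • (c/2) = (c/2) * δ := by
          rw [smul_eq_mul]; ring
        linarith [harith ▸ h]
      have hBlb : ∀ z, y + δ ≤ z → (c/2)*δ ≤ ∫ x in (0:ℝ)..z, f x * ψ x := by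
        intro z hz
        have a1 := intervalIntegral.integral_add_adjacent_intervals
          (hII 0 y le_rfl hy) (hII y (y+δ) hy (by linarith))
        have a2 := intervalIntegral.integral_add_adjacent_intervals
          (hII 0 (y+δ) le_rfl (by linarith)) (hII (y+δ) z (by linarith) hz)
        have n1 : 0 ≤ ∫ x in (0:ℝ)..y, f x * ψ x :=
          intervalIntegral.integral_nonneg hy (fun x hx => hfψn x hx.1)
        have n3 : 0 ≤ ∫ x in (y+δ)..z, f x * ψ x :=
          intervalIntegral.integral_nonneg hz (fun x hx => hfψn x (by linarith [hx.1]))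
        linarith
      set m := (c/2)*δ with hm
      have hmpos : 0 < m := mul_pos (half_pos hc) hδpos
      have hΦsub : IntegrableOn Φ (Ioi (y+δ)) := by
        apply Integrable.mono'
          ((hΦB_int.mono_set (Ioi_subset_Ioi (by linarith : (0:ℝ) ≤ y+δ))).const_mul m⁻¹)
        · refine (hΦ_cont.mono (fun x hx => ?_)).aestronglyMeasurable measurableSet_Ioi
          have h1 := mem_Ioi.1 hx
          show (0:ℝ) ≤ x
          linarith
        · rw [ae_restrict_iff' measurableSet_Ioi]
          refine Eventually.of_forall (fun z hz => ?_)
          have hz1 : y + δ ≤ z := le_of_lt (mem_Ioi.1 hz)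
          have hz0 : (0:ℝ) ≤ z := by linarith
          have hB := hBlb z hz1
          rw [norm_of_nonneg (hΦ_nonneg z hz0)]
          have h' : Φ z * m ≤ Φ z * (∫ x in (0:ℝ)..z, f x * ψ x) :=
            mul_le_mul_of_nonneg_left hB (hΦ_nonneg z hz0)
          calc Φ z = m⁻¹ * (Φ z * m) := by field_simp
            _ ≤ m⁻¹ * (Φ z * ∫ x in (0:ℝ)..z, f x * ψ x) :=
              mul_le_mul_of_nonneg_left h' (inv_nonneg.2 hmpos.le)
      apply hΦi
      have hcompact : IntegrableOn Φ (Ioc 0 (y+δ)) :=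
        ((hΦ_cont.mono Icc_subset_Ici_self).integrableOn_Icc).mono_set Ioc_subset_Icc_self
      have hu := hcompact.union hΦsub
      rwa [Ioc_union_Ioi_eq_Ioi (by linarith : (0:ℝ) ≤ y+δ)] at hu
    have hB0 : ∀ z ≥ (0:ℝ), (∫ x in (0:ℝ)..z, f x * ψ x) = 0 := by
      intro z hz
      have heq : EqOn (fun x => f x * ψ x) (fun _ => (0:ℝ)) (uIcc 0 z) := by
        intro x hx
        rw [uIcc_of_le hz] at hx
        exact hψ0 x hx.1
      rw [intervalIntegral.integral_congr heq, intervalIntegral.integral_zero]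
    have hcongr : EqOn
        (fun x => f x * (φ x * (∫ y in (0:ℝ)..x, Ψ y) + ψ x * (∫ y in Ioi x, Φ y)))
        (fun x => (f x * φ x) * (∫ y in (0:ℝ)..x, Ψ y)) (Ioi 0) := by
      intro x hx
      have h0 := hψ0 x (le_of_lt (mem_Ioi.1 hx))
      simp only
      calc f x * (φ x * (∫ y in (0:ℝ)..x, Ψ y) + ψ x * (∫ y in Ioi x, Φ y))
          = (f x * φ x) * (∫ y in (0:ℝ)..x, Ψ y)
            + (f x * ψ x) * (∫ y in Ioi x, Φ y) := by ring
        _ = (f x * φ x) * (∫ y in (0:ℝ)..x, Ψ y) := by rw [h0, zero_mul, add_zero]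
    rw [setIntegral_congr_fun measurableSet_Ioi hcongr, hT1_eq]
    have heq2 : EqOn
        (fun x => Ψ x * (∫ y in Ioi x, f y * φ y) + Φ x * (∫ y in (0:ℝ)..x, f y * ψ y))
        (fun z => Ψ z * ∫ x in Ioi z, f x * φ x) (Ioi 0) := by
      intro x hx
      simp only
      rw [hB0 x (le_of_lt (mem_Ioi.1 hx)), mul_zero, add_zero]
    rw [← setIntegral_congr_fun measurableSet_Ioi heq2]
    exact hsum_val
end
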